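/- arXiv:2504.18036 — 4 statements merged into one kernel-verified Lean document; each statement's English description precedes it below -/
import Mathlib

section
/- For every real number x, the Fourier series of the 2π-periodic function θ ↦ exp(i x sin θ) is given exactly by the Bessel coefficients: exp(i x sin θ) = ∑_{n ∈ ℤ} J_n(x) e^{i n θ}, where the series converges absolutely, and uniformly in θ ∈ ℝ. -/
open MeasureTheory Filter

/-- Bessel function of the first kind of integer order `n`, via the integral
representation `J_n(x) = (1/(2π)) ∫_0^{2π} exp(i (x sin θ - n θ)) dθ`. -/
noncomputable def besselJ (n : ℤ) (x : ℝ) : ℂ :=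
  (1 / (2 * Real.pi)) * ∫ θ in (0:ℝ)..(2 * Real.pi),
    Complex.exp (Complex.I * ((x : ℂ) * (Real.sin θ : ℂ) - (n : ℂ) * (θ : ℂ)))

namespace BesselAux

open Complex Real

noncomputable def g (x : ℝ) (θ : ℝ) : ℂ :=
  Complex.exp (Complex.I * (x : ℂ) * (Real.sin θ : ℂ))
noncomputable def g1 (x : ℝ) (θ : ℝ) : ℂ :=
  Complex.I * (x : ℂ) * (Real.cos θ : ℂ) * g x θ
noncomputable def g2 (x : ℝ) (θ : ℝ) : ℂ :=
  Complex.I * (x : ℂ) * (-Real.sin θ : ℂ) * g x θ + Complex.I * (x : ℂ) * (Real.cos θ : ℂ) * g1 x θ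

lemma g_periodic (x : ℝ) : Function.Periodic (g x) (2 * π) := fun θ => by
  simp [g, Real.sin_add_two_pi]

lemma g_cont (x : ℝ) : Continuous (g x) := by unfold g; fun_prop
lemma g1_cont (x : ℝ) : Continuous (g1 x) := by unfold g1 g; fun_prop
lemma g2_cont (x : ℝ) : Continuous (g2 x) := by unfold g2 g1 g; fun_prop

instance : Fact (0 < 2 * π) := ⟨Real.two_pi_pos⟩

noncomputable def F (x : ℝ) : C(AddCircle (2 * π), ℂ) :=
  ⟨(g_periodic x).lift, (g_cont x).quotient_liftOn' _⟩

lemma F_coe (x θ : ℝ) : F x (θ : AddCircle (2 * π)) = g x θ :=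
  (g_periodic x).lift_coe θ

lemma hasDerivAt_g (x θ : ℝ) : HasDerivAt (g x) (g1 x θ) θ := by
  have h2 := ((Real.hasDerivAt_sin θ).ofReal_comp.const_mul (Complex.I * (x:ℂ))).cexp
  unfold g1 g
  convert h2 using 1
  ring

lemma hasDerivAt_g1 (x θ : ℝ) : HasDerivAt (g1 x) (g2 x θ) θ := by
  have hu : HasDerivAt (fun y : ℝ => Complex.I * (x:ℂ) * (Real.cos y : ℂ))
      (Complex.I * (x:ℂ) * (-Real.sin θ : ℂ)) θ := by
    have h := (Real.hasDerivAt_cos θ).ofReal_comp.const_mul (Complex.I * (x:ℂ))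
    exact h.congr_deriv (by push_cast; ring)
  exact hu.mul (hasDerivAt_g x θ)

lemma norm_g (x θ : ℝ) : ‖g x θ‖ = 1 := by
  have : Complex.I * (x : ℂ) * (Real.sin θ : ℂ) = ((x * Real.sin θ : ℝ) : ℂ) * Complex.I := by
    push_cast; ring
  rw [g, this, Complex.norm_exp_ofReal_mul_I]

lemma norm_g2_le (x θ : ℝ) : ‖g2 x θ‖ ≤ |x| + x ^ 2 := by
  have h1 : ‖g2 x θ‖ ≤ ‖Complex.I * (x:ℂ) * (-Real.sin θ : ℂ) * g x θ‖ +
      ‖Complex.I * (x:ℂ) * (Real.cos θ : ℂ) * g1 x θ‖ := norm_add_le _ _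
  have hs : |Real.sin θ| ≤ 1 := abs_le.mpr ⟨Real.neg_one_le_sin θ, Real.sin_le_one θ⟩
  have hc : |Real.cos θ| ≤ 1 := abs_le.mpr ⟨Real.neg_one_le_cos θ, Real.cos_le_one θ⟩
  have e1 : ‖Complex.I * (x:ℂ) * (-Real.sin θ : ℂ) * g x θ‖ = |x| * |Real.sin θ| := by
    simp only [norm_mul, norm_neg, Complex.norm_I, Complex.norm_real, Real.norm_eq_abs,
      norm_g, one_mul, mul_one]
  have e2 : ‖Complex.I * (x:ℂ) * (Real.cos θ : ℂ) * g1 x θ‖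
      = |x| * |Real.cos θ| * (|x| * |Real.cos θ|) := by
    simp only [g1, norm_mul, Complex.norm_I, Complex.norm_real, Real.norm_eq_abs,
      norm_g, one_mul, mul_one]
  rw [e1, e2] at h1
  have hx : 0 ≤ |x| := abs_nonneg x
  have b1 : |x| * |Real.sin θ| ≤ |x| := by nlinarith [abs_nonneg (Real.sin θ)]
  have b2 : |x| * |Real.cos θ| * (|x| * |Real.cos θ|) ≤ x ^ 2 := by
    have h0 : |x| * |Real.cos θ| ≤ |x| := by nlinarith [abs_nonneg (Real.cos θ)]
    have h0' : 0 ≤ |x| * |Real.cos θ| := mul_nonneg hx (abs_nonneg _)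
    calc |x| * |Real.cos θ| * (|x| * |Real.cos θ|) ≤ |x| * |x| :=
          mul_le_mul h0 h0 h0' hx
      _ = x ^ 2 := by rw [← _root_.sq_abs x]; ring
  linarith

lemma integrand_eq (n : ℤ) (x θ : ℝ) (T : ℝ) (hT : T = 2 * π) :
    fourier (-n) (θ : AddCircle T) • g x θ =
      Complex.exp (Complex.I * ((x : ℂ) * (Real.sin θ : ℂ) - (n : ℂ) * (θ : ℂ))) := by
  subst hT
  rw [fourier_coe_apply, g, smul_eq_mul, ← Complex.exp_add]
  congr 1
  have hπ : (π : ℂ) ≠ 0 := Complex.ofReal_ne_zero.mpr Real.pi_ne_zero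
  push_cast
  field_simp
  ring

lemma fourierCoeff_F (n : ℤ) (x : ℝ) : fourierCoeff (⇑(F x)) n = besselJ n x := by
  rw [fourierCoeff_eq_intervalIntegral _ n 0, zero_add, besselJ]
  rw [Complex.real_smul]
  push_cast
  congr 1
  refine intervalIntegral.integral_congr fun θ _ => ?_
  rw [F_coe, integrand_eq n x θ _ rfl]; simp [Complex.ofReal_sin]

lemma fourierCoeffOn_g (n : ℤ) (x : ℝ) :
    fourierCoeffOn Real.two_pi_pos (g x) n = besselJ n x := by
  rw [fourierCoeffOn_eq_integral, besselJ, Complex.real_smul]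
  push_cast
  rw [sub_zero]
  congr 1
  refine intervalIntegral.integral_congr fun θ _ => ?_
  rw [integrand_eq n x θ _ (by ring)]; simp [Complex.ofReal_sin]

lemma coeff_step {f f1 : ℝ → ℂ} (hf : ∀ θ, HasDerivAt f (f1 θ) θ) (hf1 : Continuous f1)
    (hper : f (2 * π) = f 0) {n : ℤ} (hn : n ≠ 0) :
    fourierCoeffOn Real.two_pi_pos f n
      = 1 / (Complex.I * n) * fourierCoeffOn Real.two_pi_pos f1 n := by
  rw [fourierCoeffOn_of_hasDerivAt Real.two_pi_pos hn (fun θ _ => hf θ)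
    (hf1.intervalIntegrable _ _), hper, sub_self, mul_zero, zero_sub]
  have hn' : (n : ℂ) ≠ 0 := Int.cast_ne_zero.mpr hn
  have hπ : (π : ℂ) ≠ 0 := Complex.ofReal_ne_zero.mpr Real.pi_ne_zero
  push_cast
  field_simp
  ring

lemma norm_coeff_g2_le (x : ℝ) (n : ℤ) :
    ‖fourierCoeffOn Real.two_pi_pos (g2 x) n‖ ≤ |x| + x ^ 2 := by
  rw [fourierCoeffOn_eq_integral]
  have h2π : (0:ℝ) < 2 * π - 0 := by rw [sub_zero]; positivity
  have hC : (0:ℝ) ≤ |x| + x ^ 2 := by positivity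
  have hb : ∀ θ ∈ Set.uIoc (0:ℝ) (2 * π),
      ‖fourier (-n) (θ : AddCircle (2 * π - 0)) • g2 x θ‖ ≤ |x| + x ^ 2 := by
    intro θ _
    rw [norm_smul]
    have h1 : ‖fourier (-n) (θ : AddCircle (2 * π - 0))‖ = 1 := Circle.norm_coe _
    rw [h1, one_mul]
    exact norm_g2_le x θ
  have hint := intervalIntegral.norm_integral_le_of_norm_le_const hb
  rw [norm_smul, Real.norm_eq_abs]
  have h2 : |1 / (2 * π - 0)| = 1 / (2 * π) := by
    rw [abs_of_pos (by positivity)]; ring_nf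
  rw [h2]
  calc 1 / (2 * π) * ‖∫ θ in (0:ℝ)..(2 * π), fourier (-n) (θ : AddCircle (2 * π - 0)) • g2 x θ‖
      ≤ 1 / (2 * π) * ((|x| + x ^ 2) * |2 * π - 0|) := by
        apply mul_le_mul_of_nonneg_left hint (by positivity : (0:ℝ) ≤ 1 / (2 * π))
    _ = |x| + x ^ 2 := by
        rw [_root_.abs_of_pos h2π, sub_zero]
        have hπ : (π:ℝ) ≠ 0 := Real.pi_ne_zero
        field_simp

lemma besselJ_bound (x : ℝ) {n : ℤ} (hn : n ≠ 0) :
    ‖besselJ n x‖ ≤ (|x| + x ^ 2) / (n : ℝ) ^ 2 := by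
  have hg : g x (2 * π) = g x 0 := by simp [g, Real.sin_two_pi]
  have hg1 : g1 x (2 * π) = g1 x 0 := by
    simp [g1, g, Real.sin_two_pi, Real.cos_two_pi]
  have s1 := coeff_step (hasDerivAt_g x) (g1_cont x) hg hn
  have s2 := coeff_step (hasDerivAt_g1 x) (g2_cont x) hg1 hn
  rw [← fourierCoeffOn_g, s1, s2]
  have hnorm : ‖(1:ℂ) / (Complex.I * n)‖ = 1 / |(n:ℝ)| := by
    have : ((n:ℂ)) = ((n:ℝ) : ℂ) := by push_cast; ring
    rw [norm_div, norm_one, norm_mul, Complex.norm_I, one_mul, this, Complex.norm_real,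
      Real.norm_eq_abs]
  rw [norm_mul, norm_mul, hnorm]
  have h2 := norm_coeff_g2_le x n
  have hn0 : (0:ℝ) < |(n:ℝ)| := by
    simp only [abs_pos]
    exact_mod_cast hn
  calc 1 / |(n:ℝ)| * (1 / |(n:ℝ)| * ‖fourierCoeffOn Real.two_pi_pos (g2 x) n‖)
      ≤ 1 / |(n:ℝ)| * (1 / |(n:ℝ)| * (|x| + x ^ 2)) := by
        apply mul_le_mul_of_nonneg_left _ (by positivity)
        exact mul_le_mul_of_nonneg_left h2 (by positivity)
    _ = (|x| + x ^ 2) / (n : ℝ) ^ 2 := by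
        have hne : |(n:ℝ)| ≠ 0 := hn0.ne'
        rw [← _root_.sq_abs (n:ℝ)]
        field_simp

lemma summable_norm_besselJ (x : ℝ) : Summable fun n : ℤ => ‖besselJ n x‖ := by
  have hsum : Summable (fun n : ℤ => (|x| + x ^ 2) * (1 / (n:ℝ) ^ 2)) :=
    (Real.summable_one_div_int_pow.mpr one_lt_two).mul_left _
  apply Summable.of_norm_bounded_eventually hsum
  rw [Filter.eventually_cofinite]
  apply Set.Finite.subset (Set.finite_singleton (0:ℤ))
  intro n hn
  simp only [Set.mem_setOf_eq, not_le] at hn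
  by_contra h0
  simp only [Set.mem_singleton_iff] at h0
  have := besselJ_bound x h0
  rw [Real.norm_eq_abs, _root_.abs_of_nonneg (norm_nonneg _)] at hn
  rw [div_eq_mul_one_div] at this
  linarith

end BesselAux

open BesselAux Complex Real in
/-- For every real `x`, the Fourier series of `θ ↦ exp(i x sin θ)` is given exactly by the
Bessel coefficients: `exp(i x sin θ) = ∑_{n ∈ ℤ} J_n(x) e^{i n θ}`, the series converging
absolutely, and uniformly in `θ ∈ ℝ`. -/
theorem fourier_series_exp_sin (x : ℝ) :
    Summable (fun n : ℤ => ‖besselJ n x‖) ∧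
    (∀ θ : ℝ,
      HasSum (fun n : ℤ => besselJ n x * Complex.exp (Complex.I * (n : ℂ) * (θ : ℂ)))
        (Complex.exp (Complex.I * (x : ℂ) * (Real.sin θ : ℂ)))) ∧
    TendstoUniformly
      (fun (s : Finset ℤ) (θ : ℝ) =>
        ∑ n ∈ s, besselJ n x * Complex.exp (Complex.I * (n : ℂ) * (θ : ℂ)))
      (fun θ : ℝ => Complex.exp (Complex.I * (x : ℂ) * (Real.sin θ : ℂ)))
      atTop := by
  have hsum : Summable (fourierCoeff (⇑(F x))) := by
    apply Summable.of_norm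
    simp only [fourierCoeff_F]
    exact summable_norm_besselJ x
  have hterm : ∀ (n : ℤ) (θ : ℝ),
      fourierCoeff (⇑(F x)) n • fourier n (θ : AddCircle (2 * π))
        = besselJ n x * Complex.exp (Complex.I * (n : ℂ) * (θ : ℂ)) := by
    intro n θ
    rw [fourierCoeff_F, smul_eq_mul, fourier_coe_apply]
    congr 1
    congr 1
    have hπ : (π : ℂ) ≠ 0 := Complex.ofReal_ne_zero.mpr Real.pi_ne_zero
    field_simp
    push_cast; ring
  refine ⟨summable_norm_besselJ x, fun θ => ?_, ?_⟩
  · have h := has_pointwise_sum_fourier_series_of_summable hsum (θ : AddCircle (2 * π))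
    rw [show (F x) (θ : AddCircle (2 * π)) = Complex.exp (Complex.I * (x : ℂ) * (Real.sin θ : ℂ))
      from F_coe x θ] at h
    refine h.congr_fun fun n => ?_
    exact (hterm n θ).symm
  · have H := hasSum_fourier_series_of_summable hsum
    have H2 : Tendsto (fun s : Finset ℤ => ∑ n ∈ s, fourierCoeff (⇑(F x)) n • fourier n)
        atTop (nhds (F x)) := H
    rw [ContinuousMap.tendsto_iff_tendstoUniformly] at H2
    have H3 := H2.comp (fun θ : ℝ => (θ : AddCircle (2 * π)))
    have e1 : (fun (s : Finset ℤ) (θ : ℝ) =>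
          ∑ n ∈ s, besselJ n x * Complex.exp (Complex.I * (n : ℂ) * (θ : ℂ)))
        = fun s : Finset ℤ =>
            (⇑(∑ n ∈ s, fourierCoeff (⇑(F x)) n • fourier n)
              ∘ fun θ : ℝ => (θ : AddCircle (2 * π))) := by
      funext s θ
      simp only [Function.comp_apply, ContinuousMap.coe_sum, Finset.sum_apply]
      exact (Finset.sum_congr rfl fun n _ => (hterm n θ)).symm
    have e2 : (fun θ : ℝ => Complex.exp (Complex.I * (x : ℂ) * (Real.sin θ : ℂ)))
        = (⇑(F x) ∘ fun θ : ℝ => (θ : AddCircle (2 * π))) := by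
      funext θ; exact (F_coe x θ).symm
    rw [e1, e2]
    exact H3
end

section
/- (Finite-aperture integral expansion.) For all real numbers x and φ and all real a < b, ∫_a^b exp(i x cos(θ − φ)) dθ = (b − a) J_0(x) + 4 ∑_{p=1}^∞ (i^p / p) J_p(x) cos(p((a + b)/2 − φ)) sin(p(b − a)/2), where the series converges absolutely. -/
open MeasureTheory Filter

open Complex
noncomputable def gg (x θ : ℝ) : ℂ := Complex.exp (Complex.I * ((x:ℂ) * (Real.sin θ : ℂ)))

lemma gg_per (x : ℝ) : Function.Periodic (gg x) (2 * Real.pi) := by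
  intro θ; simp [gg, Real.sin_add_two_pi]

lemma gg_cont (x : ℝ) : Continuous (gg x) := by
  unfold gg; fun_prop

noncomputable def FF (x : ℝ) : C(AddCircle (2 * Real.pi), ℂ) :=
  ⟨(gg_per x).lift, (gg_cont x).quotient_liftOn' _⟩

lemma FF_coe (x θ : ℝ) : FF x (θ : AddCircle (2 * Real.pi)) = gg x θ :=
  Function.Periodic.lift_coe (gg_per x) θ

lemma fourierCoeff_FF (x : ℝ) (n : ℤ) :
    haveI : Fact (0 < 2 * Real.pi) := ⟨Real.two_pi_pos⟩
    fourierCoeff (FF x : AddCircle (2 * Real.pi) → ℂ) n = besselJ n x := by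
  haveI : Fact (0 < 2 * Real.pi) := ⟨Real.two_pi_pos⟩
  rw [fourierCoeff_eq_intervalIntegral _ n 0]
  rw [besselJ]
  rw [zero_add]
  rw [Complex.real_smul]
  congr 1
  · push_cast [Real.pi_ne_zero]
    ring
  · apply intervalIntegral.integral_congr
    intro θ _
    show (fourier (-n)) (θ : AddCircle (2 * Real.pi)) • (FF x) (θ : AddCircle (2 * Real.pi)) = _
    rw [FF_coe, fourier_coe_apply, gg, smul_eq_mul, ← Complex.exp_add]
    congr 1
    have h2π : (2 * Real.pi : ℂ) ≠ 0 := by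
      simpa using Real.pi_ne_zero
    push_cast
    field_simp
    ring
noncomputable def dgg (x θ : ℝ) : ℂ := Complex.I * (x:ℂ) * (Real.cos θ:ℂ) * gg x θ
noncomputable def ddgg (x θ : ℝ) : ℂ :=
  -(Complex.I * (x:ℂ) * (Real.sin θ:ℂ)) * gg x θ + Complex.I * (x:ℂ) * (Real.cos θ:ℂ) * dgg x θ

lemma gg_hasDeriv (x θ : ℝ) : HasDerivAt (gg x) (dgg x θ) θ := by
  have h1 : HasDerivAt (fun t : ℝ => (Real.sin t : ℂ)) ((Real.cos θ : ℂ)) θ :=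
    (Real.hasDerivAt_sin θ).ofReal_comp
  have h2 := (h1.const_mul ((x:ℂ))).const_mul Complex.I
  have h3 := h2.cexp
  refine h3.congr_deriv ?_
  rw [dgg, gg]; ring

lemma dgg_hasDeriv (x θ : ℝ) : HasDerivAt (dgg x) (ddgg x θ) θ := by
  have h1 : HasDerivAt (fun t : ℝ => Complex.I * (x:ℂ) * (Real.cos t : ℂ))
      (Complex.I * (x:ℂ) * (-Real.sin θ : ℂ)) θ := by
    have := ((Real.hasDerivAt_cos θ).ofReal_comp).const_mul (Complex.I * (x:ℂ))
    simpa using this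
  have := h1.mul (gg_hasDeriv x θ)
  refine this.congr_deriv ?_
  rw [ddgg, dgg]; push_cast; ring

lemma gg_norm (x θ : ℝ) : ‖gg x θ‖ = 1 := by
  rw [gg, Complex.norm_exp]
  simp [Complex.mul_re]

lemma dgg_norm (x θ : ℝ) : ‖dgg x θ‖ ≤ |x| := by
  rw [dgg]
  rw [norm_mul, gg_norm, mul_one, norm_mul, norm_mul]
  simp only [Complex.norm_I, one_mul, Complex.norm_real, Real.norm_eq_abs]
  calc |x| * |Real.cos θ| ≤ |x| * 1 := by
        exact mul_le_mul_of_nonneg_left (Real.abs_cos_le_one θ) (abs_nonneg x)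
    _ = |x| := mul_one _

lemma ddgg_norm (x θ : ℝ) : ‖ddgg x θ‖ ≤ |x| + |x| * |x| := by
  rw [ddgg]
  refine (norm_add_le _ _).trans ?_
  gcongr
  · rw [neg_mul, norm_neg, norm_mul, gg_norm, mul_one, norm_mul, norm_mul]
    simp only [Complex.norm_I, one_mul, Complex.norm_real, Real.norm_eq_abs]
    calc |x| * |Real.sin θ| ≤ |x| * 1 :=
          mul_le_mul_of_nonneg_left (Real.abs_sin_le_one θ) (abs_nonneg x)
      _ = |x| := mul_one _
  · refine (norm_mul_le _ _).trans ?_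
    rw [norm_mul, norm_mul]
    simp only [Complex.norm_I, one_mul, Complex.norm_real, Real.norm_eq_abs]
    calc |x| * |Real.cos θ| * ‖dgg x θ‖ ≤ |x| * 1 * |x| := by
          gcongr
          · exact Real.abs_cos_le_one θ
          · exact dgg_norm x θ
      _ = |x| * |x| := by ring
lemma dgg_cont (x : ℝ) : Continuous (dgg x) := by
  unfold dgg; exact (by fun_prop : Continuous fun θ:ℝ => Complex.I * (x:ℂ) * (Real.cos θ:ℂ)).mul (gg_cont x)
lemma ddgg_cont (x : ℝ) : Continuous (ddgg x) := by
  unfold ddgg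
  exact ((by fun_prop : Continuous fun θ:ℝ => -(Complex.I * (x:ℂ) * (Real.sin θ:ℂ))).mul (gg_cont x)).add
    ((by fun_prop : Continuous fun θ:ℝ => Complex.I * (x:ℂ) * (Real.cos θ:ℂ)).mul (dgg_cont x))

lemma twopi_pos : (0:ℝ) < 2 * Real.pi := Real.two_pi_pos

lemma besselJ_eq_fourierCoeffOn (x : ℝ) (n : ℤ) :
    besselJ n x = fourierCoeffOn twopi_pos (gg x) n := by
  rw [fourierCoeffOn_eq_integral, besselJ, sub_zero, Complex.real_smul]
  congr 1
  · push_cast [Real.pi_ne_zero]; ring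
  · apply intervalIntegral.integral_congr
    intro θ _
    beta_reduce
    show Complex.exp (Complex.I * ((x : ℂ) * (Real.sin θ : ℂ) - (n : ℂ) * (θ : ℂ)))
      = (fourier (-n)) (θ : AddCircle (2 * Real.pi)) • gg x θ
    rw [fourier_coe_apply, gg, smul_eq_mul, ← Complex.exp_add]
    congr 1
    have h2π : (2 * Real.pi : ℂ) ≠ 0 := by simpa using Real.pi_ne_zero
    push_cast
    field_simp
    ring

lemma fourier_norm_one {T : ℝ} (n : ℤ) (z : AddCircle T) : ‖(fourier n z : ℂ)‖ = 1 := by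
  rw [fourier_apply, Circle.norm_coe]

lemma fourierCoeffOn_norm_le (f : ℝ → ℂ) (M : ℝ) (hM : ∀ θ, ‖f θ‖ ≤ M) (n : ℤ) :
    ‖fourierCoeffOn twopi_pos f n‖ ≤ M := by
  rw [fourierCoeffOn_eq_integral]
  rw [norm_smul]
  have : ‖∫ θ in (0:ℝ)..(2*Real.pi), (fourier (-n)) (θ : AddCircle (2 * Real.pi - 0)) • f θ‖
      ≤ M * |2 * Real.pi - 0| := by
    apply intervalIntegral.norm_integral_le_of_norm_le_const
    intro θ _
    rw [norm_smul, fourier_norm_one, one_mul]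
    exact hM θ
  calc ‖(1:ℝ)/(2*Real.pi - 0)‖ * ‖∫ θ in (0:ℝ)..(2*Real.pi), (fourier (-n)) (θ : AddCircle (2 * Real.pi - 0)) • f θ‖
      ≤ ‖(1:ℝ)/(2*Real.pi - 0)‖ * (M * |2 * Real.pi - 0|) := by gcongr
    _ = M := by
        have h2π : (0:ℝ) < 2*Real.pi - 0 := by simpa using twopi_pos
        rw [Real.norm_eq_abs, abs_div, abs_one, abs_of_pos h2π]
        field_simp

lemma besselJ_decay (x : ℝ) {n : ℤ} (hn : n ≠ 0) :
    ‖besselJ n x‖ ≤ (|x| + |x| * |x|) / (n:ℝ)^2 := by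
  have hstep : ∀ (f df : ℝ → ℂ), (∀ θ, HasDerivAt f (df θ) θ) → Continuous df → f (2*Real.pi) = f 0 →
      ‖fourierCoeffOn twopi_pos f n‖ = ‖fourierCoeffOn twopi_pos df n‖ / |(n:ℝ)| := by
    intro f df hd hc hper
    rw [fourierCoeffOn_of_hasDerivAt twopi_pos hn (fun θ _ => hd θ)
      (hc.intervalIntegrable _ _)]
    rw [hper, sub_self, mul_zero, zero_sub, norm_mul, norm_neg, norm_mul]
    rw [norm_div, norm_one]
    have e1 : ‖(-2 * (Real.pi:ℂ) * Complex.I * (n:ℂ))‖ = 2 * Real.pi * |(n:ℝ)| := by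
      rw [norm_mul, norm_mul, norm_mul, norm_neg, Complex.norm_two,
        Complex.norm_real, Real.norm_eq_abs, Complex.norm_I, Complex.norm_intCast, abs_of_pos Real.pi_pos, mul_one]
    have e2 : ‖((2*Real.pi:ℝ):ℂ) - ((0:ℝ):ℂ)‖ = 2 * Real.pi := by
      rw [Complex.ofReal_zero, sub_zero, Complex.norm_real, Real.norm_eq_abs, abs_of_pos twopi_pos]
    rw [e1, e2]
    have hn' : |(n:ℝ)| ≠ 0 := by
      simpa [abs_eq_zero] using (by exact_mod_cast hn : (n:ℝ) ≠ 0)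
    field_simp
  have h1 := hstep (gg x) (dgg x) (gg_hasDeriv x) (dgg_cont x)
    (by simp [gg, Real.sin_two_pi])
  have h2 := hstep (dgg x) (ddgg x) (dgg_hasDeriv x) (ddgg_cont x)
    (by simp [dgg, gg, Real.sin_two_pi, Real.cos_two_pi])
  have h3 := fourierCoeffOn_norm_le (ddgg x) (|x| + |x| * |x|) (ddgg_norm x) n
  rw [besselJ_eq_fourierCoeffOn, h1, h2]
  rw [div_div, sq]
  have hthis : |(n:ℝ)| * |(n:ℝ)| = (n:ℝ) * (n:ℝ) := by
    rw [← _root_.abs_mul, _root_.abs_of_nonneg (mul_self_nonneg _)]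
  rw [← hthis]
  have hn0 : (0:ℝ) < |(n:ℝ)| := abs_pos.mpr (by exact_mod_cast hn)
  gcongr
lemma exp_I_int_pi (n : ℤ) : Complex.exp (Complex.I * n * Real.pi) = (-1:ℂ)^n := by
  rw [show Complex.I * n * Real.pi = n * (Real.pi * Complex.I) by ring, Complex.exp_int_mul,
    Complex.exp_pi_mul_I]

lemma besselJ_neg (n : ℤ) (x : ℝ) : besselJ (-n) x = (-1:ℂ)^n * besselJ n x := by
  set h : ℝ → ℂ := fun u => Complex.exp (Complex.I * ((x : ℂ) * (Real.sin u : ℂ) - (n : ℂ) * (u : ℂ))) with hh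
  have hper : Function.Periodic h (2 * Real.pi) := by
    intro u
    simp only [hh]
    rw [Real.sin_add_two_pi]
    rw [show Complex.I * ((x:ℂ) * (Real.sin u : ℂ) - (n:ℂ) * ((u + 2*Real.pi : ℝ) : ℂ))
        = Complex.I * ((x:ℂ) * (Real.sin u : ℂ) - (n:ℂ) * (u:ℂ)) + (-n : ℤ) * (2 * Real.pi * Complex.I) by
      push_cast; ring]
    rw [Complex.exp_add, Complex.exp_int_mul_two_pi_mul_I, mul_one]
  have key : ∀ θ : ℝ, Complex.exp (Complex.I * ((x : ℂ) * (Real.sin θ : ℂ) - ((-n : ℤ) : ℂ) * (θ : ℂ)))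
      = (-1:ℂ)^n * h (Real.pi - θ) := by
    intro θ
    simp only [hh]
    rw [Real.sin_pi_sub, ← exp_I_int_pi n, ← Complex.exp_add]
    congr 1
    push_cast
    ring
  rw [besselJ, besselJ]
  rw [show (∫ θ in (0:ℝ)..(2 * Real.pi),
      Complex.exp (Complex.I * ((x : ℂ) * (Real.sin θ : ℂ) - ((-n : ℤ) : ℂ) * (θ : ℂ))))
      = ∫ θ in (0:ℝ)..(2 * Real.pi), (-1:ℂ)^n * h (Real.pi - θ) from
    intervalIntegral.integral_congr (fun θ _ => key θ)]
  rw [intervalIntegral.integral_const_mul]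
  rw [intervalIntegral.integral_comp_sub_left (fun u => h u) Real.pi, sub_zero]
  have hshift := hper.intervalIntegral_add_eq (Real.pi - 2*Real.pi) 0
  rw [show Real.pi - 2*Real.pi + 2*Real.pi = Real.pi by ring, zero_add] at hshift
  rw [hshift]
  ring
lemma summable_shift (M : ℝ) : Summable (fun p : ℕ => M / ((p:ℝ)+1)^2) := by
  have h := (Real.summable_one_div_nat_pow (p := 2)).mpr one_lt_two
  have h2 := ((summable_nat_add_iff 1).mpr h).mul_left M
  refine h2.congr fun p => ?_
  push_cast
  rw [mul_one_div]

lemma summable_norm_besselJ (x : ℝ) : Summable (fun n : ℤ => ‖besselJ n x‖) := by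
  set M := |x| + |x| * |x| with hM
  apply Summable.of_nat_of_neg_add_one
  · rw [← summable_nat_add_iff 1]
    apply Summable.of_nonneg_of_le (fun p => norm_nonneg _) _ (summable_shift M)
    intro p
    have h := besselJ_decay x (n := (p:ℤ)+1) (by positivity)
    refine h.trans (le_of_eq ?_)
    congr 1
    push_cast
    ring
  · apply Summable.of_nonneg_of_le (fun p => norm_nonneg _) _ (summable_shift M)
    intro p
    have h := besselJ_decay x (n := -((p:ℤ)+1)) (by
      intro hc
      have : ((p:ℤ)+1) = 0 := by omega
      omega)
    refine h.trans (le_of_eq ?_)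
    congr 1
    push_cast
    ring
lemma cos_to_exp (p : ℕ) (t : ℝ) :
    ((Real.cos (((p:ℝ)+1)*t) : ℝ) : ℂ)
      = (Complex.exp (Complex.I*((p:ℂ)+1)*(t:ℂ)) + Complex.exp (Complex.I*(-((p:ℂ)+1))*(t:ℂ)))/2 := by
  rw [show Complex.I*((p:ℂ)+1)*(t:ℂ) = (((((p:ℝ)+1)*t : ℝ)):ℂ) * Complex.I by push_cast; ring,
    show Complex.I*(-((p:ℂ)+1))*(t:ℂ) = (((-(((p:ℝ)+1)*t)) : ℝ):ℂ) * Complex.I by push_cast; ring,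
    Complex.exp_mul_I, Complex.exp_mul_I, Complex.ofReal_neg, Complex.cos_neg, Complex.sin_neg,
    Complex.ofReal_cos]
  ring

lemma sin_to_exp (p : ℕ) (t : ℝ) :
    ((Real.sin (((p:ℝ)+1)*t) : ℝ) : ℂ)
      = (Complex.exp (Complex.I*((p:ℂ)+1)*(t:ℂ)) - Complex.exp (Complex.I*(-((p:ℂ)+1))*(t:ℂ)))/(2*Complex.I) := by
  rw [show Complex.I*((p:ℂ)+1)*(t:ℂ) = (((((p:ℝ)+1)*t : ℝ)):ℂ) * Complex.I by push_cast; ring,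
    show Complex.I*(-((p:ℂ)+1))*(t:ℂ) = (((-(((p:ℝ)+1)*t)) : ℝ):ℂ) * Complex.I by push_cast; ring,
    Complex.exp_mul_I, Complex.exp_mul_I, Complex.ofReal_neg, Complex.cos_neg, Complex.sin_neg,
    Complex.ofReal_sin]
  field_simp
  ring

lemma exp_pos_pi_half (p : ℕ) :
    Complex.exp (Complex.I*((p:ℂ)+1)*((Real.pi/2 : ℝ):ℂ)) = Complex.I^(p+1) := by
  rw [show Complex.I*((p:ℂ)+1)*((Real.pi/2 : ℝ):ℂ) = ((p+1 : ℕ):ℂ) * (((Real.pi/2 : ℝ):ℂ) * Complex.I) by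
    push_cast; ring, Complex.exp_nat_mul]
  congr 1
  rw [Complex.exp_mul_I, ← Complex.ofReal_cos, ← Complex.ofReal_sin, Real.cos_pi_div_two,
    Real.sin_pi_div_two]
  simp

lemma exp_neg_pi_half (p : ℕ) :
    Complex.exp (Complex.I*(-((p:ℂ)+1))*((Real.pi/2 : ℝ):ℂ)) = (-1:ℂ)^(p+1) * Complex.I^(p+1) := by
  rw [show Complex.I*(-((p:ℂ)+1))*((Real.pi/2 : ℝ):ℂ)
      = ((p+1 : ℕ):ℂ) * (((-(Real.pi/2) : ℝ):ℂ) * Complex.I) by push_cast; ring,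
    Complex.exp_nat_mul]
  have base : Complex.exp (((-(Real.pi/2) : ℝ):ℂ) * Complex.I) = -Complex.I := by
    rw [Complex.exp_mul_I, ← Complex.ofReal_cos, ← Complex.ofReal_sin]
    simp [Real.cos_pi_div_two, Real.sin_pi_div_two]
  rw [base, ← mul_pow]
  norm_num

lemma pair_eq (x φ a b : ℝ) (p : ℕ) :
    besselJ ((p:ℤ)+1) x *
      ((Complex.exp (Complex.I*((p:ℂ)+1)*((b + (Real.pi/2 - φ) : ℝ):ℂ)) -
        Complex.exp (Complex.I*((p:ℂ)+1)*((a + (Real.pi/2 - φ) : ℝ):ℂ)))/(Complex.I*((p:ℂ)+1)))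
    + besselJ (-((p:ℤ)+1)) x *
      ((Complex.exp (Complex.I*(-((p:ℂ)+1))*((a + (Real.pi/2 - φ) : ℝ):ℂ)) -
        Complex.exp (Complex.I*(-((p:ℂ)+1))*((b + (Real.pi/2 - φ) : ℝ):ℂ)))/(Complex.I*((p:ℂ)+1)))
    = (4 : ℂ) * (Complex.I ^ (p + 1) / ((p : ℂ) + 1)) * besselJ (p + 1) x *
        (Real.cos (((p : ℝ) + 1) * ((a + b) / 2 - φ)) : ℂ) *
        (Real.sin (((p : ℝ) + 1) * (b - a) / 2) : ℂ) := by
  have hN : ((p:ℂ)+1) ≠ 0 := Nat.cast_add_one_ne_zero p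
  have hb' : (b + (Real.pi/2 - φ) : ℝ) = ((a+b)/2 - φ) + ((b-a)/2) + Real.pi/2 := by ring
  have ha' : (a + (Real.pi/2 - φ) : ℝ) = ((a+b)/2 - φ) + (-((b-a)/2)) + Real.pi/2 := by ring
  have f1 : Complex.exp (Complex.I*((p:ℂ)+1)*((b + (Real.pi/2 - φ) : ℝ):ℂ))
      = Complex.exp (Complex.I*((p:ℂ)+1)*((((a+b)/2 - φ : ℝ)):ℂ)) *
        Complex.exp (Complex.I*((p:ℂ)+1)*((((b-a)/2 : ℝ)):ℂ)) * Complex.I^(p+1) := by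
    rw [← exp_pos_pi_half p, ← Complex.exp_add, ← Complex.exp_add]
    rw [hb']; push_cast; try ring_nf
  have f2 : Complex.exp (Complex.I*((p:ℂ)+1)*((a + (Real.pi/2 - φ) : ℝ):ℂ))
      = Complex.exp (Complex.I*((p:ℂ)+1)*((((a+b)/2 - φ : ℝ)):ℂ)) *
        Complex.exp (Complex.I*(-((p:ℂ)+1))*((((b-a)/2 : ℝ)):ℂ)) * Complex.I^(p+1) := by
    rw [← exp_pos_pi_half p, ← Complex.exp_add, ← Complex.exp_add]
    rw [ha']; push_cast; try ring_nf
  have f3 : Complex.exp (Complex.I*(-((p:ℂ)+1))*((b + (Real.pi/2 - φ) : ℝ):ℂ))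
      = Complex.exp (Complex.I*(-((p:ℂ)+1))*((((a+b)/2 - φ : ℝ)):ℂ)) *
        Complex.exp (Complex.I*(-((p:ℂ)+1))*((((b-a)/2 : ℝ)):ℂ)) * ((-1:ℂ)^(p+1) * Complex.I^(p+1)) := by
    rw [← exp_neg_pi_half p, ← Complex.exp_add, ← Complex.exp_add]
    rw [hb']; push_cast; try ring_nf
  have f4 : Complex.exp (Complex.I*(-((p:ℂ)+1))*((a + (Real.pi/2 - φ) : ℝ):ℂ))
      = Complex.exp (Complex.I*(-((p:ℂ)+1))*((((a+b)/2 - φ : ℝ)):ℂ)) *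
        Complex.exp (Complex.I*((p:ℂ)+1)*((((b-a)/2 : ℝ)):ℂ)) * ((-1:ℂ)^(p+1) * Complex.I^(p+1)) := by
    rw [← exp_neg_pi_half p, ← Complex.exp_add, ← Complex.exp_add]
    rw [ha']; push_cast; try ring_nf
  have hJneg : besselJ (-((p:ℤ)+1)) x = (-1:ℂ)^(p+1) * besselJ ((p:ℤ)+1) x := by
    rw [besselJ_neg]
    congr 1
  have htgt1 : ((p : ℝ) + 1) * ((a + b) / 2 - φ) = ((p:ℝ)+1) * (((a+b)/2 - φ)) := by ring
  have htgt2 : ((p : ℝ) + 1) * (b - a) / 2 = ((p:ℝ)+1) * ((b-a)/2) := by ring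
  have hIN : Complex.I*((p:ℂ)+1) ≠ 0 := mul_ne_zero Complex.I_ne_zero hN
  have hIN' : Complex.I*(-((p:ℂ)+1)) ≠ 0 := mul_ne_zero Complex.I_ne_zero (neg_ne_zero.mpr hN)
  rw [htgt2, hJneg, f1, f2, f3, f4, cos_to_exp p ((a+b)/2 - φ), sin_to_exp p ((b-a)/2)]
  set J := besselJ ((p:ℤ)+1) x with hJ
  set A := Complex.exp (Complex.I*((p:ℂ)+1)*((((a+b)/2 - φ : ℝ)):ℂ)) with hA
  set A' := Complex.exp (Complex.I*(-((p:ℂ)+1))*((((a+b)/2 - φ : ℝ)):ℂ)) with hA'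
  set B := Complex.exp (Complex.I*((p:ℂ)+1)*((((b-a)/2 : ℝ)):ℂ)) with hB
  set B' := Complex.exp (Complex.I*(-((p:ℂ)+1))*((((b-a)/2 : ℝ)):ℂ)) with hB'
  rcases Nat.even_or_odd (p+1) with hpar | hpar
  · rw [hpar.neg_one_pow]
    field_simp
    ring
  · rw [hpar.neg_one_pow]
    field_simp
    ring
/-- Finite-aperture integral expansion: for all real `x`, `φ` and all real `a < b`,
`∫_a^b exp(i x cos(θ − φ)) dθ
  = (b − a) J_0(x) + 4 ∑_{p=1}^∞ (i^p / p) J_p(x) cos(p((a + b)/2 − φ)) sin(p(b − a)/2)`,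
the series converging absolutely. -/
theorem finite_aperture_expansion (x φ a b : ℝ) (hab : a < b) :
    Summable (fun p : ℕ =>
      ‖(4 : ℂ) * (Complex.I ^ (p + 1) / ((p : ℂ) + 1)) * besselJ (p + 1) x *
        (Real.cos (((p : ℝ) + 1) * ((a + b) / 2 - φ)) : ℂ) *
        (Real.sin (((p : ℝ) + 1) * (b - a) / 2) : ℂ)‖) ∧
    (∫ θ in a..b, Complex.exp (Complex.I * (x : ℂ) * (Real.cos (θ - φ) : ℂ)))
      = ((b : ℂ) - (a : ℂ)) * besselJ 0 x +
        ∑' p : ℕ,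
          (4 : ℂ) * (Complex.I ^ (p + 1) / ((p : ℂ) + 1)) * besselJ (p + 1) x *
            (Real.cos (((p : ℝ) + 1) * ((a + b) / 2 - φ)) : ℂ) *
            (Real.sin (((p : ℝ) + 1) * (b - a) / 2) : ℂ) := by
  haveI : Fact (0 < 2 * Real.pi) := ⟨Real.two_pi_pos⟩
  set s : ℝ := Real.pi/2 - φ with hs
  have hcnorm : Summable (fun n : ℤ => ‖besselJ n x‖) := summable_norm_besselJ x
  have hceq : (fourierCoeff (⇑(FF x)) : ℤ → ℂ) = fun n => besselJ n x :=
    funext (fourierCoeff_FF x)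
  have hcsum : Summable (fourierCoeff (⇑(FF x))) := by rw [hceq]; exact hcnorm.of_norm
  have hps : ∀ t : ℝ,
      HasSum (fun n : ℤ => besselJ n x * (fourier n (t : AddCircle (2*Real.pi)) : ℂ)) (gg x t) := by
    intro t
    have h0 := has_pointwise_sum_fourier_series_of_summable hcsum ((t : AddCircle (2*Real.pi)))
    rw [hceq, FF_coe] at h0
    simpa [smul_eq_mul] using h0
  have hfour : ∀ (n : ℤ) (t : ℝ), (fourier n ((t : ℝ) : AddCircle (2*Real.pi)) : ℂ)
      = Complex.exp (Complex.I * n * t) := by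
    intro n t
    rw [fourier_coe_apply]
    have h2π : (2*Real.pi : ℂ) ≠ 0 := by simpa using Real.pi_ne_zero
    congr 1
    field_simp
    push_cast
    ring
  set In : ℤ → ℂ :=
    fun n => ∫ θ in Set.Ioc a b, (fourier n ((θ + s : ℝ) : AddCircle (2*Real.pi)) : ℂ) with hIn
  have hcont : ∀ n : ℤ,
      Continuous (fun θ : ℝ => (fourier n ((θ + s : ℝ) : AddCircle (2*Real.pi)) : ℂ)) := by
    intro n
    exact (map_continuous (fourier n)).comp
      ((AddCircle.continuous_mk' (2*Real.pi)).comp (continuous_id.add continuous_const))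
  have hint : ∀ n : ℤ, IntegrableOn
      (fun θ : ℝ => besselJ n x * (fourier n ((θ + s:ℝ) : AddCircle (2*Real.pi)) : ℂ))
      (Set.Ioc a b) := fun n => (continuous_const.mul (hcont n)).integrableOn_Ioc
  have hvol : (volume (Set.Ioc a b)).toReal = b - a := by
    rw [Real.volume_Ioc, ENNReal.toReal_ofReal (by linarith)]
  have hnormint : ∀ n : ℤ,
      (∫ θ in Set.Ioc a b, ‖besselJ n x * (fourier n ((θ+s:ℝ) : AddCircle (2*Real.pi)) : ℂ)‖)
        = ‖besselJ n x‖ * (b-a) := by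
    intro n
    have h1 : ∀ θ:ℝ, ‖besselJ n x * (fourier n ((θ+s:ℝ) : AddCircle (2*Real.pi)) : ℂ)‖
        = ‖besselJ n x‖ := by
      intro θ; rw [norm_mul, fourier_norm_one, mul_one]
    simp only [h1]
    rw [MeasureTheory.setIntegral_const, smul_eq_mul, Measure.real, hvol, mul_comm]
  have hswap := MeasureTheory.hasSum_integral_of_summable_integral_norm
    (μ := volume.restrict (Set.Ioc a b))
    (F := fun (n:ℤ) (θ:ℝ) => besselJ n x * (fourier n ((θ+s:ℝ) : AddCircle (2*Real.pi)) : ℂ))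
    hint ((hcnorm.mul_right (b-a)).congr fun n => (hnormint n).symm)
  have htsum_eq : (∫ θ in Set.Ioc a b,
      ∑' n : ℤ, besselJ n x * (fourier n ((θ+s:ℝ) : AddCircle (2*Real.pi)) : ℂ))
      = ∫ θ in Set.Ioc a b, gg x (θ+s) := by
    apply MeasureTheory.integral_congr_ae
    filter_upwards with θ
    exact (hps (θ+s)).tsum_eq
  have hlhs : (∫ θ in a..b, Complex.exp (Complex.I * x * (Real.cos (θ - φ):ℂ)))
      = ∫ θ in Set.Ioc a b, gg x (θ+s) := by
    rw [intervalIntegral.integral_of_le hab.le]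
    apply MeasureTheory.integral_congr_ae
    filter_upwards with θ
    rw [gg, show θ + s = (θ - φ) + Real.pi/2 by rw [hs]; ring, Real.sin_add_pi_div_two]
    congr 1
    ring
  set G : ℤ → ℂ := fun n => besselJ n x * In n with hG
  have key : HasSum G (∫ θ in Set.Ioc a b, gg x (θ+s)) := by
    rw [htsum_eq] at hswap
    refine hswap.congr_fun ?_
    intro n
    simp only [hG]
    exact (MeasureTheory.integral_const_mul _ _).symm
  have hIn0 : In 0 = (b:ℂ) - a := by
    have h1 : ∀ θ:ℝ, (fourier (0:ℤ) ((θ+s:ℝ) : AddCircle (2*Real.pi)) : ℂ) = 1 := by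
      intro θ; rw [fourier_zero]
    simp only [hIn, h1]
    rw [MeasureTheory.setIntegral_const, Measure.real, hvol]
    push_cast
    simp
  have hInn : ∀ n : ℤ, n ≠ 0 → In n =
      (Complex.exp (Complex.I*(n:ℂ)*((b+s:ℝ):ℂ)) - Complex.exp (Complex.I*(n:ℂ)*((a+s:ℝ):ℂ)))
        / (Complex.I*(n:ℂ)) := by
    intro n hn
    have hIeq : In n = ∫ θ in a..b, (fourier n ((θ+s:ℝ) : AddCircle (2*Real.pi)) : ℂ) :=
      (intervalIntegral.integral_of_le hab.le).symm
    rw [hIeq, intervalIntegral.integral_congr (fun θ _ => hfour n (θ+s))]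
    have := intervalIntegral.integral_comp_add_right (a := a) (b := b)
      (fun u : ℝ => Complex.exp (Complex.I*(n:ℂ)*(u:ℂ))) s
    rw [this, integral_exp_mul_complex (mul_ne_zero Complex.I_ne_zero
      (Int.cast_ne_zero.mpr hn))]
  have hGnorm : Summable fun n : ℤ => ‖G n‖ := by
    apply Summable.of_nonneg_of_le (fun _ => norm_nonneg _) _ (hcnorm.mul_right (b-a))
    intro n
    simp only [hG, norm_mul]
    have hInle : ‖In n‖ ≤ b - a := by
      have h2 : ‖In n‖ ≤ 1 * |b - a| := by
        rw [show In n = ∫ θ in a..b, (fourier n ((θ+s:ℝ) : AddCircle (2*Real.pi)) : ℂ) from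
          (intervalIntegral.integral_of_le hab.le).symm]
        apply intervalIntegral.norm_integral_le_of_norm_le_const
        intro θ _
        rw [fourier_norm_one]
      rw [one_mul, abs_of_pos (by linarith : (0:ℝ) < b - a)] at h2
      exact h2
    gcongr
  have hposinj : Function.Injective (fun p : ℕ => (p:ℤ)+1) := by
    intro p q h; simp only at h; omega
  have hneginj : Function.Injective (fun p : ℕ => -((p:ℤ)+1)) := by
    intro p q h; simp only at h; omega
  have hA : Summable fun p : ℕ => G ((p:ℤ)+1) := key.summable.comp_injective hposinj
  have hB : Summable fun p : ℕ => G (-((p:ℤ)+1)) := key.summable.comp_injective hneginj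
  have hAn : Summable fun p : ℕ => ‖G ((p:ℤ)+1)‖ := hGnorm.comp_injective hposinj
  have hBn : Summable fun p : ℕ => ‖G (-((p:ℤ)+1))‖ := hGnorm.comp_injective hneginj
  have hdecomp := HasSum.of_add_one_of_neg_add_one hA.hasSum hB.hasSum
  have hS := key.unique hdecomp
  have hterm : ∀ p : ℕ, G ((p:ℤ)+1) + G (-((p:ℤ)+1))
      = (4 : ℂ) * (Complex.I ^ (p + 1) / ((p : ℂ) + 1)) * besselJ (p + 1) x *
          (Real.cos (((p : ℝ) + 1) * ((a + b) / 2 - φ)) : ℂ) *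
          (Real.sin (((p : ℝ) + 1) * (b - a) / 2) : ℂ) := by
    intro p
    have hN : ((p:ℂ)+1) ≠ 0 := Nat.cast_add_one_ne_zero p
    have hIN : Complex.I*((p:ℂ)+1) ≠ 0 := mul_ne_zero Complex.I_ne_zero hN
    have hIN' : Complex.I*(-((p:ℂ)+1)) ≠ 0 := mul_ne_zero Complex.I_ne_zero (neg_ne_zero.mpr hN)
    have c1 : (((p:ℤ)+1 : ℤ) : ℂ) = (p:ℂ)+1 := by push_cast; ring
    have c2 : ((-((p:ℤ)+1) : ℤ) : ℂ) = -((p:ℂ)+1) := by push_cast; ring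
    have e1 := hInn ((p:ℤ)+1) (by omega)
    have e2 := hInn (-((p:ℤ)+1)) (by omega)
    rw [c1] at e1
    rw [c2] at e2
    have e2' : In (-((p:ℤ)+1)) =
        (Complex.exp (Complex.I*(-((p:ℂ)+1))*((a+s:ℝ):ℂ)) -
         Complex.exp (Complex.I*(-((p:ℂ)+1))*((b+s:ℝ):ℂ))) / (Complex.I*((p:ℂ)+1)) := by
      rw [e2, div_eq_div_iff hIN' hIN]
      ring
    simp only [hG]
    rw [e1, e2']
    have := pair_eq x φ a b p
    rw [hs]
    convert this using 5 <;> push_cast <;> ring_nf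
  constructor
  · apply Summable.of_nonneg_of_le (fun _ => norm_nonneg _) _ (hAn.add hBn)
    intro p
    rw [← hterm p]
    exact norm_add_le _ _
  · rw [hlhs, hS]
    have hG0 : G 0 = ((b:ℂ) - a) * besselJ 0 x := by
      simp only [hG]; rw [hIn0]; ring
    have htsum : ∑' p : ℕ, ((4 : ℂ) * (Complex.I ^ (p + 1) / ((p : ℂ) + 1)) * besselJ (p + 1) x *
          (Real.cos (((p : ℝ) + 1) * ((a + b) / 2 - φ)) : ℂ) *
          (Real.sin (((p : ℝ) + 1) * (b - a) / 2) : ℂ))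
        = (∑' p : ℕ, G ((p:ℤ)+1)) + ∑' p : ℕ, G (-((p:ℤ)+1)) := by
      rw [← Summable.tsum_add hA hB]
      exact tsum_congr fun p => (hterm p).symm
    rw [htsum, hG0]
    ring
end

section
/- (Receiver-aperture identity used in Theorem 3.1.) Let x, ϑ, φ be real numbers and let 0 < α < π. Then (1/(2(π − α))) ∫_{ϑ+α}^{ϑ+2π−α} exp(i x cos(θ − φ)) dθ = J_0(x) + 2 ∑_{p=1}^∞ i^p J_p(x) cos(p(ϑ + π − φ)) sinc(p(π − α)), where the series converges absolutely. -/
open MeasureTheory Filter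

/-- The unnormalized sinc function: `sinc t = sin t / t` for `t ≠ 0`, and `sinc 0 = 1`. -/
noncomputable def rsinc (t : ℝ) : ℝ := if t = 0 then 1 else Real.sin t / t


section Aux
open Complex Real

noncomputable def Fc (x : ℝ) : ℝ → ℂ := fun u => Complex.exp (Complex.I * x * (Real.cos u : ℂ))

lemma Fc_periodic (x : ℝ) : Function.Periodic (Fc x) (2 * Real.pi) := fun u => by
  simp [Fc, Real.cos_add_two_pi]

noncomputable def fG (x : ℝ) : C(AddCircle (2 * Real.pi), ℂ) :=
  ⟨(Fc_periodic x).lift, continuous_coinduced_dom.mpr (by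
    show Continuous (Fc x)
    exact Complex.continuous_exp.comp (by continuity))⟩

lemma fG_coe (x u : ℝ) : fG x (u : AddCircle (2 * Real.pi)) = Fc x u :=
  (Fc_periodic x).lift_coe u

noncomputable def besselCoeff (x : ℝ) (n : ℤ) : ℂ :=
  (1 / (2 * Real.pi)) * ∫ θ in (0:ℝ)..(2 * Real.pi),
    Complex.exp (Complex.I * x * (Real.cos θ : ℂ) - Complex.I * n * θ)

lemma fourierCoeff_fG (x : ℝ) (n : ℤ) :
    haveI : Fact (0 < 2 * Real.pi) := ⟨by positivity⟩
    fourierCoeff (⇑(fG x)) n = besselCoeff x n := by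
  haveI : Fact (0 < 2 * Real.pi) := ⟨by positivity⟩
  rw [fourierCoeff_eq_intervalIntegral (⇑(fG x)) n 0]
  rw [besselCoeff]
  rw [zero_add, Complex.real_smul]
  congr 1
  · push_cast; norm_num
  refine intervalIntegral.integral_congr fun u hu => ?_
  rw [fG_coe, smul_eq_mul, Fc]
  rw [fourier_coe_apply]
  rw [← Complex.exp_add]
  congr 1
  have hπ : (Real.pi : ℂ) ≠ 0 := by
    exact_mod_cast Real.pi_ne_zero
  push_cast
  field_simp
  ring

lemma besselCoeff_nat (x : ℝ) (n : ℕ) :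
    besselCoeff x n = Complex.I ^ n * besselJ n x := by
  have key : ∀ u : ℝ, Complex.exp (Complex.I * x * (Real.cos u : ℂ) - Complex.I * (n : ℂ) * u)
      = Complex.I ^ n *
        Complex.exp (Complex.I * ((x : ℂ) * (Real.sin (u + Real.pi/2) : ℂ)
          - (n : ℂ) * ((u + Real.pi/2 : ℝ) : ℂ))) := by
    intro u
    have h1 : Real.sin (u + Real.pi/2) = Real.cos u := by
      rw [Real.sin_add, Real.sin_pi_div_two, Real.cos_pi_div_two]; ring
    have h2 : (Complex.I : ℂ) ^ n = Complex.exp (Complex.I * n * (Real.pi/2 : ℝ)) := by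
      have : Complex.exp (Complex.I * n * (Real.pi/2 : ℝ))
          = Complex.exp ((Real.pi/2 : ℝ) * Complex.I) ^ n := by
        rw [← Complex.exp_nat_mul]; ring_nf
      rw [this, Complex.exp_mul_I]
      push_cast
      rw [Complex.cos_pi_div_two, Complex.sin_pi_div_two]
      ring_nf
    rw [h1, h2, ← Complex.exp_add]
    push_cast
    ring_nf
  rw [besselCoeff, besselJ]
  simp only [Int.cast_natCast]
  rw [intervalIntegral.integral_congr (g := fun u => Complex.I ^ n *
        Complex.exp (Complex.I * ((x : ℂ) * (Real.sin (u + Real.pi/2) : ℂ)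
          - (n : ℂ) * ((u + Real.pi/2 : ℝ) : ℂ)))) (fun u _ => key u)]
  rw [intervalIntegral.integral_const_mul]
  have sub : (∫ u in (0:ℝ)..(2*Real.pi), Complex.exp (Complex.I * ((x : ℂ) * (Real.sin (u + Real.pi/2) : ℂ)
          - (n : ℂ) * ((u + Real.pi/2 : ℝ) : ℂ))))
      = ∫ θ in (Real.pi/2)..(Real.pi/2 + 2*Real.pi), Complex.exp (Complex.I * ((x : ℂ) * (Real.sin θ : ℂ)
          - (n : ℂ) * (θ : ℂ))) := by
    have := intervalIntegral.integral_comp_add_right (a := (0:ℝ)) (b := 2*Real.pi) (d := Real.pi/2)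
      (fun θ : ℝ => Complex.exp (Complex.I * ((x : ℂ) * (Real.sin θ : ℂ) - (n : ℂ) * (θ : ℂ))))
    rw [this, zero_add, add_comm (2*Real.pi) (Real.pi/2)]
  rw [sub]
  have hper : Function.Periodic (fun θ : ℝ => Complex.exp (Complex.I * ((x : ℂ) * (Real.sin θ : ℂ)
      - (n : ℂ) * (θ : ℂ)))) (2 * Real.pi) := by
    intro u
    simp only [Real.sin_add_two_pi]
    rw [Complex.exp_eq_exp_iff_exists_int]
    refine ⟨-n, ?_⟩
    push_cast
    ring
  rw [hper.intervalIntegral_add_eq (Real.pi/2) 0, zero_add]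

  ring

lemma besselCoeff_neg (x : ℝ) (n : ℤ) : besselCoeff x (-n) = besselCoeff x n := by
  rw [besselCoeff, besselCoeff]
  congr 1
  have := intervalIntegral.integral_comp_sub_left (a := (0:ℝ)) (b := 2*Real.pi)
    (fun θ : ℝ => Complex.exp (Complex.I * x * (Real.cos θ : ℂ) - Complex.I * n * θ)) (2*Real.pi)
  rw [sub_self, sub_zero] at this
  rw [← this]
  refine intervalIntegral.integral_congr fun u hu => ?_
  show Complex.exp _ = Complex.exp _
  rw [Real.cos_two_pi_sub, Complex.exp_eq_exp_iff_exists_int]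
  refine ⟨n, ?_⟩
  push_cast
  ring

set_option maxHeartbeats 2000000

lemma besselCoeff_bound (x : ℝ) (n : ℤ) (hn : n ≠ 0) :
    ‖besselCoeff x n‖ ≤ (|x| + x^2) / (n:ℝ)^2 := by
  set F : ℝ → ℂ := fun θ => Complex.exp (Complex.I * x * (Real.cos θ : ℂ)) with hFdef
  set F1 : ℝ → ℂ := fun θ => (-(Complex.I * x * (Real.sin θ : ℂ))) * F θ with hF1def
  set F2 : ℝ → ℂ := fun θ =>
    (-(Complex.I * x * (Real.cos θ : ℂ)) - (x:ℂ)^2 * (Real.sin θ : ℂ)^2) * F θ with hF2def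
  set en : ℝ → ℂ := fun θ => Complex.exp (-(Complex.I * n * θ)) with hendef
  have hIn : (Complex.I * n) ≠ 0 := by
    simp [Complex.I_ne_zero, hn]
  set v : ℝ → ℂ := fun θ => en θ / (-(Complex.I * n)) with hvdef
  -- derivative facts
  have hcos : ∀ θ : ℝ, HasDerivAt (fun θ : ℝ => ((Real.cos θ : ℝ) : ℂ)) (-Real.sin θ : ℝ) θ :=
    fun θ => (Real.hasDerivAt_cos θ).ofReal_comp
  have hsin : ∀ θ : ℝ, HasDerivAt (fun θ : ℝ => ((Real.sin θ : ℝ) : ℂ)) (Real.cos θ : ℝ) θ :=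
    fun θ => (Real.hasDerivAt_sin θ).ofReal_comp
  have hF : ∀ θ : ℝ, HasDerivAt F (F1 θ) θ := by
    intro θ
    have h := (((hcos θ).const_mul (Complex.I * x)).cexp)
    convert h using 1
    simp [hF1def, hFdef]
    ring
  have hF1 : ∀ θ : ℝ, HasDerivAt F1 (F2 θ) θ := by
    intro θ
    have h := (((hsin θ).const_mul (Complex.I * x)).neg).mul (hF θ)
    refine h.congr_deriv ?_
    simp only [hF1def, hF2def, hFdef, Pi.neg_apply]
    ring_nf
    rw [Complex.I_sq]
    ring
  have hv : ∀ θ : ℝ, HasDerivAt v (en θ) θ := by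
    intro θ
    have hid : HasDerivAt (fun θ : ℝ => ((θ : ℝ) : ℂ)) 1 θ := by
      simpa using (hasDerivAt_id θ).ofReal_comp
    have h := (((hid.const_mul (Complex.I * n)).neg).cexp).div_const (-(Complex.I * n))
    refine h.congr_deriv ?_
    field_simp [hendef, Pi.neg_apply]
    rfl
  -- continuity / integrability
  have hcF : Continuous F := by continuity
  have hcF1 : Continuous F1 := by continuity
  have hcF2 : Continuous F2 := by continuity
  have hcen : Continuous en := by continuity
  -- boundary values
  have hen0 : en 0 = 1 := by simp [hendef]
  have hen2π : en (2 * Real.pi) = 1 := by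
    have : en (2 * Real.pi) = Complex.exp (((-n : ℤ) : ℂ) * (2 * Real.pi * Complex.I)) := by
      simp only [hendef]
      congr 1
      push_cast; ring
    rw [this, Complex.exp_int_mul_two_pi_mul_I]
  -- first integration by parts
  have P1 : (∫ θ in (0:ℝ)..(2*Real.pi), F θ * en θ)
      = F (2*Real.pi) * v (2*Real.pi) - F 0 * v 0 - ∫ θ in (0:ℝ)..(2*Real.pi), F1 θ * v θ := by
    exact intervalIntegral.integral_mul_deriv_eq_deriv_mul
      (fun θ _ => hF θ) (fun θ _ => hv θ)
      (hcF1.intervalIntegrable _ _) (hcen.intervalIntegrable _ _)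
  have P2 : (∫ θ in (0:ℝ)..(2*Real.pi), F1 θ * en θ)
      = F1 (2*Real.pi) * v (2*Real.pi) - F1 0 * v 0 - ∫ θ in (0:ℝ)..(2*Real.pi), F2 θ * v θ := by
    exact intervalIntegral.integral_mul_deriv_eq_deriv_mul
      (fun θ _ => hF1 θ) (fun θ _ => hv θ)
      (hcF2.intervalIntegrable _ _) (hcen.intervalIntegrable _ _)
  have hFbd : F (2*Real.pi) = F 0 := by simp [hFdef, Real.cos_two_pi]
  have hF1bd2 : F1 (2*Real.pi) = 0 := by simp [hF1def, Real.sin_two_pi]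
  have hF1bd0 : F1 0 = 0 := by simp [hF1def]
  have hvbd : v (2*Real.pi) = v 0 := by
    show en (2*Real.pi) / _ = en 0 / _
    rw [hen2π, hen0]
  have hvint : ∀ G : ℝ → ℂ, (∫ θ in (0:ℝ)..(2*Real.pi), G θ * v θ)
      = (∫ θ in (0:ℝ)..(2*Real.pi), G θ * en θ) / (-(Complex.I * n)) := by
    intro G
    rw [← intervalIntegral.integral_div]
    refine intervalIntegral.integral_congr fun θ _ => ?_
    rw [hvdef]; ring
  have key : (∫ θ in (0:ℝ)..(2*Real.pi), F θ * en θ)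
      = (∫ θ in (0:ℝ)..(2*Real.pi), F2 θ * en θ) / (-(Complex.I * n))^2 := by
    rw [P1, hvint, hvbd, hFbd, sub_self, zero_sub, P2, hF1bd2, hF1bd0, hvint]
    simp only [zero_mul, sub_self, zero_sub]
    field_simp
  -- rewrite besselCoeff
  have hbc : besselCoeff x n = (1 / (2 * Real.pi)) * ∫ θ in (0:ℝ)..(2*Real.pi), F θ * en θ := by
    rw [besselCoeff]
    congr 1
    refine intervalIntegral.integral_congr fun θ _ => ?_
    rw [hFdef, hendef, ← Complex.exp_add]
    ring_nf
  -- norm estimate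
  have hnorm2 : ‖∫ θ in (0:ℝ)..(2*Real.pi), F2 θ * en θ‖ ≤ (|x| + x^2) * (2*Real.pi) := by
    have h := intervalIntegral.norm_integral_le_of_norm_le_const
      (C := |x| + x^2) (f := fun θ => F2 θ * en θ) (a := (0:ℝ)) (b := 2*Real.pi) ?_
    · have habs : |2*Real.pi - 0| = 2*Real.pi := by
        rw [sub_zero]; exact abs_of_pos Real.two_pi_pos
      rw [habs] at h
      exact h
    · intro θ _
      have hFn : ‖F θ‖ = 1 := by
        simp [hFdef, Complex.norm_exp]
      have henn : ‖en θ‖ = 1 := by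
        simp [hendef, Complex.norm_exp]
      rw [norm_mul, henn, mul_one, hF2def, norm_mul, hFn, mul_one]
      calc ‖(-(Complex.I * x * (Real.cos θ : ℂ)) - (x:ℂ)^2 * (Real.sin θ : ℂ)^2)‖
          ≤ ‖Complex.I * x * (Real.cos θ : ℂ)‖ + ‖(x:ℂ)^2 * (Real.sin θ : ℂ)^2‖ := by
            refine (norm_sub_le _ _).trans ?_
            rw [norm_neg]
        _ ≤ |x| + x^2 := by
            simp only [norm_mul, norm_pow, Complex.norm_I, one_mul, Complex.norm_real,
              Real.norm_eq_abs]
            have h1 : |x| * |Real.cos θ| ≤ |x| := by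
              nlinarith [Real.abs_cos_le_one θ, abs_nonneg x, Real.abs_cos_le_one θ]
            have hs : |Real.sin θ|^2 ≤ 1 := by
              nlinarith [Real.abs_sin_le_one θ, abs_nonneg (Real.sin θ)]
            have h2 : |x|^2 * |Real.sin θ|^2 ≤ x^2 := by
              nlinarith [hs, sq_nonneg x, _root_.sq_abs x, sq_nonneg (|Real.sin θ|)]
            nlinarith
  -- conclude
  have h1 : ‖(1 : ℂ) / (2 * (Real.pi:ℂ))‖ = 1 / (2*Real.pi) := by
    rw [norm_div, norm_one]
    rw [show ((2:ℂ) * (Real.pi:ℂ)) = ((2*Real.pi : ℝ) : ℂ) by push_cast; ring]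
    rw [Complex.norm_real, Real.norm_eq_abs, abs_of_pos Real.two_pi_pos]
  have h2 : ‖(-(Complex.I * (n:ℂ)))^2‖ = (n:ℝ)^2 := by
    rw [norm_pow, norm_neg, norm_mul, Complex.norm_I, one_mul]
    rw [show ((n:ℂ)) = ((n:ℝ):ℂ) by push_cast; ring, Complex.norm_real, Real.norm_eq_abs, _root_.sq_abs]
  have hn2 : (0:ℝ) < (n:ℝ)^2 := by
    have : (n:ℝ) ≠ 0 := Int.cast_ne_zero.mpr hn
    positivity
  rw [hbc, key, norm_mul,
    norm_div (∫ θ in (0:ℝ)..(2*Real.pi), F2 θ * en θ) ((-(Complex.I * (n:ℂ)))^2), h1, h2]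
  calc 1/(2*Real.pi) * (‖∫ θ in (0:ℝ)..(2*Real.pi), F2 θ * en θ‖ / (n:ℝ)^2)
      ≤ 1/(2*Real.pi) * (((|x| + x^2) * (2*Real.pi)) / (n:ℝ)^2) := by
        gcongr
    _ = (|x| + x^2) / (n:ℝ)^2 := by
        rw [mul_comm (|x|+x^2) (2*Real.pi), mul_div_assoc, ← mul_assoc, one_div,
          inv_mul_cancel₀ Real.two_pi_pos.ne', one_mul]

lemma besselCoeff_summable (x : ℝ) : Summable (fun n : ℤ => ‖besselCoeff x n‖) := by
  have hg : Summable (fun n : ℤ => (|x| + x^2) / (n:ℝ)^2) := by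
    have := (Real.summable_one_div_int_pow (p := 2)).mpr one_lt_two
    simpa [div_eq_mul_inv] using this.mul_left (|x| + x^2)
  refine Summable.of_norm_bounded_eventually hg ?_
  have : {n : ℤ | ¬ ‖‖besselCoeff x n‖‖ ≤ (|x| + x^2) / (n:ℝ)^2} ⊆ {0} := by
    intro n hn
    by_contra h0
    exact hn (by rw [norm_norm]; exact besselCoeff_bound x n (by simpa using h0))
  have hfin : {n : ℤ | ¬ ‖‖besselCoeff x n‖‖ ≤ (|x| + x^2) / (n:ℝ)^2}.Finite :=
    (Set.finite_singleton 0).subset this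
  exact Filter.eventually_cofinite.mpr hfin

lemma hasSum_pointwise (x u : ℝ) :
    HasSum (fun n : ℤ => besselCoeff x n * Complex.exp (Complex.I * n * u)) (Fc x u) := by
  haveI : Fact (0 < 2*Real.pi) := ⟨Real.two_pi_pos⟩
  have hsummable : Summable (fourierCoeff (⇑(fG x))) := by
    apply Summable.of_norm
    simp_rw [fourierCoeff_fG]
    exact besselCoeff_summable x
  have h := has_pointwise_sum_fourier_series_of_summable hsummable (u : AddCircle (2*Real.pi))
  rw [fG_coe] at h
  convert h using 2 with n
  rw [fourierCoeff_fG, smul_eq_mul, fourier_coe_apply]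
  congr 2
  push_cast
  have hπ : (Real.pi : ℂ) ≠ 0 := by exact_mod_cast Real.pi_ne_zero
  field_simp


/-- Receiver-aperture identity: for real `x`, `ϑ`, `φ` and `0 < α < π`,
`(1/(2(π − α))) ∫_{ϑ+α}^{ϑ+2π−α} exp(i x cos(θ − φ)) dθ
  = J_0(x) + 2 ∑_{p=1}^∞ i^p J_p(x) cos(p(ϑ + π − φ)) sinc(p(π − α))`,
the series converging absolutely. -/
theorem receiver_aperture_identity (x ϑ φ α : ℝ) (hα0 : 0 < α) (hαπ : α < Real.pi) :
    Summable (fun p : ℕ =>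
      ‖(2 : ℂ) * Complex.I ^ (p + 1) * besselJ (p + 1) x *
        (Real.cos (((p : ℝ) + 1) * (ϑ + Real.pi - φ)) : ℂ) *
        (rsinc (((p : ℝ) + 1) * (Real.pi - α)) : ℂ)‖) ∧
    (1 / (2 * ((Real.pi : ℂ) - (α : ℂ)))) *
        ∫ θ in (ϑ + α)..(ϑ + 2 * Real.pi - α),
          Complex.exp (Complex.I * (x : ℂ) * (Real.cos (θ - φ) : ℂ))
      = besselJ 0 x +
        ∑' p : ℕ,
          (2 : ℂ) * Complex.I ^ (p + 1) * besselJ (p + 1) x *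
            (Real.cos (((p : ℝ) + 1) * (ϑ + Real.pi - φ)) : ℂ) *
            (rsinc (((p : ℝ) + 1) * (Real.pi - α)) : ℂ) := by
  have hL : 0 < Real.pi - α := sub_pos.mpr hαπ
  -- notation
  set L : ℝ := Real.pi - α with hLdef
  set m : ℝ := ϑ + Real.pi - φ with hmdef
  set A : ℝ := ϑ + α - φ with hAdef
  set B : ℝ := ϑ + 2 * Real.pi - α - φ with hBdef
  -- the paired term for p ≥ 1
  set T : ℕ → ℂ := fun p =>
      (2 : ℂ) * Complex.I ^ (p + 1) * besselJ (p + 1) x *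
        (Real.cos (((p : ℝ) + 1) * m) : ℂ) * (rsinc (((p : ℝ) + 1) * L) : ℂ) with hTdef
  set t : ℤ → ℂ := fun n => besselCoeff x n *
      ∫ u in A..B, Complex.exp (Complex.I * n * u) with htdef
  -- Step 1: the substituted integral
  have hsub : (∫ θ in (ϑ + α)..(ϑ + 2 * Real.pi - α),
        Complex.exp (Complex.I * (x : ℂ) * (Real.cos (θ - φ) : ℂ)))
      = ∫ u in A..B, Fc x u := by
    have := intervalIntegral.integral_comp_sub_right (a := ϑ + α) (b := ϑ + 2*Real.pi - α)
      (fun u : ℝ => Fc x u) φ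
    rw [← this]
    rfl
  -- Step 2: swap sum and integral
  have hswap : HasSum t (∫ u in A..B, Fc x u) := by
    have h := intervalIntegral.hasSum_integral_of_dominated_convergence
      (μ := volume) (a := A) (b := B)
      (F := fun (n : ℤ) (u : ℝ) => besselCoeff x n * Complex.exp (Complex.I * n * u))
      (f := Fc x)
      (bound := fun n _ => ‖besselCoeff x n‖)
      (fun n => (Continuous.aestronglyMeasurable (by continuity)))
      (fun n => ae_of_all _ fun u _ => by
        rw [norm_mul]
        have : ‖Complex.exp (Complex.I * (n:ℂ) * u)‖ = 1 := by
          rw [Complex.norm_exp]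
          simp [Complex.mul_re, Complex.mul_im]
        rw [this, mul_one])
      (ae_of_all _ fun u _ => besselCoeff_summable x)
      (by
        have hc : IntervalIntegrable (fun _ : ℝ => (∑' n : ℤ, ‖besselCoeff x n‖)) volume A B :=
          intervalIntegrable_const
        exact hc)
      (ae_of_all _ fun u _ => hasSum_pointwise x u)
    have heq : ∀ n : ℤ, (∫ u in A..B, besselCoeff x n * Complex.exp (Complex.I * n * u)) = t n := by
      intro n
      rw [htdef, intervalIntegral.integral_const_mul]
    simpa only [heq] using h
  -- summability of t in norm
  have htsummable : Summable (fun n : ℤ => ‖t n‖) := by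
    refine Summable.of_nonneg_of_le (fun n => norm_nonneg _)
      (fun n => ?_) ((besselCoeff_summable x).mul_right (B - A))
    rw [htdef]
    simp only
    rw [norm_mul]
    refine mul_le_mul_of_nonneg_left ?_ (norm_nonneg _)
    refine (intervalIntegral.norm_integral_le_of_norm_le_const (C := 1) ?_).trans ?_
    · intro u _
      rw [Complex.norm_exp]
      simp [Complex.mul_re, Complex.mul_im]
    · rw [one_mul, hBdef, hAdef, abs_of_pos (by linarith)]
  -- value of t at 0
  have ht0 : t 0 = besselCoeff x 0 * ((2*L : ℝ) : ℂ) := by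
    rw [htdef]
    simp only [Int.cast_zero, mul_zero, zero_mul, Complex.exp_zero]
    rw [intervalIntegral.integral_const, Complex.real_smul, mul_one]
    congr 1
    rw [hBdef, hAdef, hLdef]
    push_cast
    ring
  -- the exp integral, for nonzero real frequency
  have hexpint : ∀ c : ℝ, c ≠ 0 → (∫ u in A..B, Complex.exp (Complex.I * (c:ℂ) * u))
      = (Complex.exp (Complex.I * (c:ℂ) * B) - Complex.exp (Complex.I * (c:ℂ) * A))
        / (Complex.I * (c:ℂ)) := by
    intro c hc
    have hIc : Complex.I * (c:ℂ) ≠ 0 := by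
      simp [Complex.I_ne_zero, Complex.ofReal_ne_zero.mpr hc]
    exact integral_exp_mul_complex hIc
  have hexp_mul_I : ∀ θ : ℝ, Complex.exp (Complex.I * (θ:ℂ))
      = ((Real.cos θ : ℝ) : ℂ) + ((Real.sin θ : ℝ) : ℂ) * Complex.I := by
    intro θ
    rw [mul_comm, Complex.exp_mul_I, Complex.ofReal_cos, Complex.ofReal_sin]
  -- pairing identity
  have hpair : ∀ p : ℕ, t ((p:ℤ)+1) + t (-((p:ℤ)+1)) = ((2*L : ℝ) : ℂ) * T p := by
    intro p
    set c : ℝ := (p:ℝ)+1 with hcdef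
    have hnr : c ≠ 0 := by positivity
    have hnL : c * L ≠ 0 := by positivity
    have e1 : ∀ u : ℝ, Complex.I * (((p:ℤ)+1 : ℤ):ℂ) * (u:ℂ) = Complex.I * ((c : ℝ):ℂ) * u := by
      intro u; rw [hcdef]; push_cast; ring
    have e2 : ∀ u : ℝ, Complex.I * ((-((p:ℤ)+1) : ℤ):ℂ) * (u:ℂ) = Complex.I * (((-c) : ℝ):ℂ) * u := by
      intro u; rw [hcdef]; push_cast; ring
    have hbn : besselCoeff x (-((p:ℤ)+1)) = besselCoeff x ((p:ℤ)+1) := by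
      simpa using besselCoeff_neg x ((p:ℤ)+1)
    rw [htdef]
    simp only
    rw [hbn]
    have hint1 : (∫ u in A..B, Complex.exp (Complex.I * (((p:ℤ)+1 : ℤ):ℂ) * u))
        = ∫ u in A..B, Complex.exp (Complex.I * ((c : ℝ):ℂ) * u) :=
      intervalIntegral.integral_congr (fun u _ => by rw [e1 u])
    have hint2 : (∫ u in A..B, Complex.exp (Complex.I * ((-((p:ℤ)+1) : ℤ):ℂ) * u))
        = ∫ u in A..B, Complex.exp (Complex.I * (((-c) : ℝ):ℂ) * u) :=
      intervalIntegral.integral_congr (fun u _ => by rw [e2 u])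
    rw [hint1, hint2, ← mul_add]
    have hcosint : (∫ u in A..B, Complex.exp (Complex.I * ((c : ℝ):ℂ) * u))
          + (∫ u in A..B, Complex.exp (Complex.I * (((-c) : ℝ):ℂ) * u))
        = (((∫ u in A..B, 2 * Real.cos (c*u)) : ℝ) : ℂ) := by
      rw [← intervalIntegral.integral_add
        ((Continuous.intervalIntegrable (by continuity) _ _))
        ((Continuous.intervalIntegrable (by continuity) _ _))]
      rw [← intervalIntegral.integral_ofReal]
      refine intervalIntegral.integral_congr fun u _ => ?_
      have g1 : Complex.I * ((c : ℝ):ℂ) * u = Complex.I * ((c*u : ℝ):ℂ) := by push_cast; ring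
      have g2 : Complex.I * (((-c) : ℝ):ℂ) * u = Complex.I * ((-(c*u) : ℝ):ℂ) := by push_cast; ring
      rw [g1, g2, hexp_mul_I, hexp_mul_I, Real.cos_neg, Real.sin_neg]
      push_cast
      ring
    rw [hcosint]
    have hreal : (∫ u in A..B, 2 * Real.cos (c*u)) = 2*L * (2 * Real.cos (c * m) * rsinc (c * L)) := by
      rw [intervalIntegral.integral_const_mul]
      rw [intervalIntegral.integral_comp_mul_left (fun y => Real.cos y) hnr]
      rw [integral_cos, smul_eq_mul]
      rw [Real.sin_sub_sin]
      have h1 : (c*B - c*A)/2 = c*L := by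
        rw [hBdef, hAdef, hLdef]; ring
      have h2 : (c*B + c*A)/2 = c*m := by
        rw [hBdef, hAdef, hmdef]; ring
      rw [h1, h2, rsinc, if_neg hnL]
      field_simp
    rw [hreal]
    have hbnat : besselCoeff x ((p:ℤ)+1) = Complex.I^(p+1) * besselJ ((p:ℤ)+1) x := by
      have h := besselCoeff_nat x (p+1)
      push_cast at h ⊢
      exact h
    rw [hbnat, hTdef]
    simp only [hcdef]
    push_cast
    ring
  -- decomposition of the ℤ-sum
  have hsummable_t : Summable t := htsummable.of_norm
  have hinj1 : Function.Injective (fun p : ℕ => (p:ℤ)+1) := by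
    intro a b h; simpa using h
  have hinj2 : Function.Injective (fun p : ℕ => -((p:ℤ)+1)) := by
    intro a b h; simpa using h
  have hpos : Summable (fun p : ℕ => t ((p:ℤ)+1)) := hsummable_t.comp_injective hinj1
  have hneg : Summable (fun p : ℕ => t (-((p:ℤ)+1))) := hsummable_t.comp_injective hinj2
  have hshift : HasSum (fun p : ℕ => t (((p+1 : ℕ) : ℤ))) (∑' p : ℕ, t ((p:ℤ)+1)) := by
    have h := hpos.hasSum
    convert h using 2 with p
    push_cast; rfl
  have hnat : HasSum (fun p : ℕ => t p) ((∑' p : ℕ, t ((p:ℤ)+1)) + t 0) := by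
    have h := (hasSum_nat_add_iff (f := fun p : ℕ => t p) 1).mp hshift
    simpa using h
  have hZ : HasSum t (((∑' p : ℕ, t ((p:ℤ)+1)) + t 0) + (∑' p : ℕ, t (-((p:ℤ)+1)))) :=
    HasSum.of_nat_of_neg_add_one hnat hneg.hasSum
  have hval : (∫ u in A..B, Fc x u)
      = ((∑' p : ℕ, t ((p:ℤ)+1)) + t 0) + (∑' p : ℕ, t (-((p:ℤ)+1))) :=
    hswap.unique hZ
  have hpairsum : HasSum (fun p : ℕ => t ((p:ℤ)+1) + t (-((p:ℤ)+1)))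
      ((∑' p : ℕ, t ((p:ℤ)+1)) + (∑' p : ℕ, t (-((p:ℤ)+1)))) :=
    hpos.hasSum.add hneg.hasSum
  have h2L : ((2*L:ℝ):ℂ) ≠ 0 := by
    rw [Complex.ofReal_ne_zero]
    positivity
  have hTeq : ∀ p : ℕ, T p = (t ((p:ℤ)+1) + t (-((p:ℤ)+1))) / ((2*L:ℝ):ℂ) := by
    intro p
    rw [hpair p, mul_div_cancel_left₀ _ h2L]
  have hTsum : HasSum T (((∑' p : ℕ, t ((p:ℤ)+1)) + (∑' p : ℕ, t (-((p:ℤ)+1)))) / ((2*L:ℝ):ℂ)) := by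
    have h := hpairsum.div_const ((2*L:ℝ):ℂ)
    exact (funext hTeq : T = _) ▸ h
  have hTsummable : Summable (fun p : ℕ => ‖T p‖) := by
    have hsum : Summable (fun p : ℕ => (‖t ((p:ℤ)+1)‖ + ‖t (-((p:ℤ)+1))‖) / (2*L)) :=
      ((htsummable.comp_injective hinj1).add (htsummable.comp_injective hinj2)).div_const _
    refine Summable.of_nonneg_of_le (fun p => norm_nonneg _) (fun p => ?_) hsum
    rw [hTeq p, norm_div]
    have hn2L : ‖((2*L:ℝ):ℂ)‖ = 2*L := by
      rw [Complex.norm_real, Real.norm_eq_abs, abs_of_pos (by positivity)]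
    rw [hn2L]
    gcongr
    exact norm_add_le _ _
  constructor
  · exact hTsummable
  · rw [hsub, hval, ht0, hTsum.tsum_eq]
    have hb0 : besselCoeff x (0:ℤ) = besselJ 0 x := by
      have := besselCoeff_nat x 0
      simpa using this
    rw [hb0]
    have hC : ((Real.pi:ℂ) - (α:ℂ)) = ((L:ℝ):ℂ) := by
      rw [hLdef]; push_cast; ring
    rw [hC]
    have : ((2*L:ℝ):ℂ) = 2 * ((L:ℝ):ℂ) := by push_cast; ring
    rw [this] at h2L ⊢
    have hL0 : ((L:ℝ):ℂ) ≠ 0 := by exact_mod_cast hL.ne'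
    field_simp
    ring

end Aux
end

section
/- (Continuous-aperture form of the Λ-term in Theorem 4.1.) Let x, φ be real numbers and let 0 < α < π. Then (1/(2π)) ∫_0^{2π} exp(i x cos(ϑ − φ)) · [ (1/(2(π − α))) ∫_{ϑ+α}^{ϑ+2π−α} exp(i x cos(θ − φ)) dθ ] dϑ = J_0(x)² + 2 ∑_{p=1}^∞ J_p(x)² sinc(p(π − α)), where the series converges absolutely. -/
open MeasureTheory Filter

set_option maxHeartbeats 1000000
set_option linter.unusedSectionVars false

namespace LambdaAux

open Complex Real Set Function intervalIntegral


/-- The integrand of `besselJ`. -/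
noncomputable def bk (n : ℤ) (x : ℝ) : ℝ → ℂ := fun θ =>
  Complex.exp (Complex.I * ((x : ℂ) * (Real.sin θ : ℂ) - (n : ℂ) * (θ : ℂ)))

lemma bk_continuous (n : ℤ) (x : ℝ) : Continuous (bk n x) := by
  unfold bk; fun_prop

lemma bk_periodic (n : ℤ) (x : ℝ) : Function.Periodic (bk n x) (2 * π) := by
  intro t
  unfold bk
  rw [Real.sin_add_two_pi]
  rw [show Complex.I * ((x:ℂ) * (Real.sin t : ℂ) - (n:ℂ) * ((t : ℝ) + 2 * π : ℝ)) =
      Complex.I * ((x:ℂ) * (Real.sin t : ℂ) - (n:ℂ) * (t:ℂ)) + (-n : ℤ) * (2 * π * Complex.I) by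
    push_cast; ring]
  rw [Complex.exp_add, Complex.exp_int_mul_two_pi_mul_I, mul_one]

lemma besselJ_eq (n : ℤ) (x : ℝ) :
    besselJ n x = (1 / (2 * π) : ℝ) • ∫ θ in (0:ℝ)..(2*π), bk n x θ := by
  rw [besselJ, Complex.real_smul]
  congr 1
  push_cast; ring

lemma norm_exp_I_mul (z : ℂ) (hz : z.re = 0) : ‖Complex.exp z‖ = 1 := by
  rw [Complex.norm_exp, hz, Real.exp_zero]

/-- J_{-n} = (-1)^n J_n -/
lemma besselJ_neg (n : ℤ) (x : ℝ) : besselJ (-n) x = (-1) ^ n * besselJ n x := by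
  suffices key : ∫ θ in (0:ℝ)..(2*π), bk (-n) x θ = (-1:ℂ)^n * ∫ θ in (0:ℝ)..(2*π), bk n x θ by
    rw [besselJ_eq, besselJ_eq, key, Complex.real_smul, Complex.real_smul]; ring
  have h1 : ∫ θ in (0:ℝ)..(2*π), bk (-n) x θ = ∫ s in (-π)..π, bk (-n) x (π - s) := by
    rw [intervalIntegral.integral_comp_sub_left (bk (-n) x) π]
    norm_num [two_mul]
  rw [h1]
  have h2 : ∀ s ∈ uIcc (-π) π, bk (-n) x (π - s) = (-1 : ℂ)^n * bk n x s := by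
    intro s _
    unfold bk
    rw [Real.sin_pi_sub]
    rw [show ((-1 : ℂ))^n = Complex.exp ((n : ℂ) * (π * Complex.I)) by
      rw [Complex.exp_int_mul, Complex.exp_pi_mul_I]]
    rw [← Complex.exp_add]
    congr 1
    push_cast
    ring
  rw [intervalIntegral.integral_congr h2, intervalIntegral.integral_const_mul]
  congr 1
  have h := (bk_periodic n x).intervalIntegral_add_eq (-π) 0
  rw [zero_add, show -π + 2 * π = π by ring] at h
  exact h

section Circle

lemma lift_continuous {f : ℝ → ℂ} (hp : Function.Periodic f (2*π)) (hc : Continuous f) :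
    Continuous hp.lift := by
  rw [(QuotientAddGroup.isQuotientMap_mk _).continuous_iff]
  exact hc

variable [hT : Fact (0 < 2 * π)]

lemma integral_haar_eq (h : AddCircle (2*π) → ℂ) :
    ∫ z, h z ∂AddCircle.haarAddCircle
      = (1/(2*π) : ℝ) • ∫ t in (0:ℝ)..(2*π), h (t : AddCircle (2*π)) := by
  have h1 := AddCircle.intervalIntegral_preimage (2*π) 0 h
  rw [zero_add] at h1
  rw [AddCircle.volume_eq_smul_haarAddCircle, MeasureTheory.integral_smul_measure,
    ENNReal.toReal_ofReal Real.two_pi_pos.le] at h1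
  rw [h1, smul_smul, one_div, inv_mul_cancel₀ Real.two_pi_pos.ne', one_smul]

lemma fourierCoeff_lift {f : ℝ → ℂ} (hp : Function.Periodic f (2*π)) (n : ℤ) :
    fourierCoeff hp.lift n
      = (1/(2*π) : ℝ) • ∫ t in (0:ℝ)..(2*π), Complex.exp (-Complex.I * n * t) * f t := by
  rw [fourierCoeff, integral_haar_eq]
  congr 1
  refine intervalIntegral.integral_congr fun t _ => ?_
  rw [hp.lift_coe, fourier_coe_apply, smul_eq_mul]
  congr 2
  have h2 : (2*π : ℂ) ≠ 0 := by
    simp [Real.pi_ne_zero]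
  field_simp
  push_cast; ring

variable (x φ α : ℝ)

/-- The aperture field. -/
noncomputable def fC : ℝ → ℂ := fun ϑ => Complex.exp (Complex.I * x * (Real.cos (ϑ - φ) : ℂ))

lemma fC_continuous : Continuous (fC x φ) := by unfold fC; fun_prop

lemma fC_periodic : Function.Periodic (fC x φ) (2*π) := by
  intro t
  unfold fC
  rw [show t + 2*π - φ = (t - φ) + 2*π by ring, Real.cos_add_two_pi]

lemma fC_norm (t : ℝ) : ‖fC x φ t‖ = 1 := by
  unfold fC
  rw [show Complex.I * x * ((Real.cos (t - φ) : ℝ) : ℂ)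
      = ((x * Real.cos (t - φ) : ℝ) : ℂ) * Complex.I by push_cast; ring]
  exact norm_exp_I_mul _ (by simp only [Complex.mul_I_re, Complex.ofReal_im, neg_zero])

lemma I_zpow_eq (n : ℤ) :
    (Complex.I : ℂ) ^ n = Complex.exp ((n : ℂ) * (((π/2 : ℝ) : ℂ) * Complex.I)) := by
  rw [Complex.exp_int_mul]
  congr 1
  rw [Complex.exp_mul_I]
  simp [← Complex.ofReal_cos, ← Complex.ofReal_sin]

/-- Fourier coefficient of `fC` equals `I^n e^{-inφ} J_n(x)`. -/
lemma fourierCoeff_fC (n : ℤ) :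
    fourierCoeff (fC_periodic x φ).lift n
      = Complex.I ^ n * Complex.exp (-Complex.I * n * φ) * besselJ n x := by
  rw [fourierCoeff_lift, besselJ_eq]
  have key : ∫ t in (0:ℝ)..(2*π), Complex.exp (-Complex.I * n * t) * fC x φ t
      = Complex.I ^ n * Complex.exp (-Complex.I * n * φ) * ∫ θ in (0:ℝ)..(2*π), bk n x θ := by
    have h2 : ∀ t ∈ uIcc (0:ℝ) (2*π),
        Complex.exp (-Complex.I * n * t) * fC x φ t
          = Complex.I ^ n * Complex.exp (-Complex.I * n * φ) * bk n x (t - (φ - π/2)) := by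
      intro t _
      unfold fC bk
      rw [show t - (φ - π/2) = (t - φ) + π/2 by ring, Real.sin_add_pi_div_two]
      rw [I_zpow_eq]
      rw [← Complex.exp_add, ← Complex.exp_add, ← Complex.exp_add]
      congr 1
      push_cast
      ring
    rw [intervalIntegral.integral_congr h2, intervalIntegral.integral_const_mul]
    congr 1
    rw [intervalIntegral.integral_comp_sub_right (bk n x) (φ - π/2)]
    have h := (bk_periodic n x).intervalIntegral_add_eq (0 - (φ - π/2)) 0
    rw [zero_add, zero_sub, show -(φ - π/2) + 2*π = 2*π - (φ - π/2) by ring] at h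
    rw [zero_sub]
    exact h
  rw [key, Complex.real_smul, Complex.real_smul]
  ring

/-- The averaged (inner-integral) field. -/
noncomputable def gC : ℝ → ℂ := fun ϑ =>
  (1 / (2 * ((π : ℂ) - α))) * ∫ θ in (ϑ + α)..(ϑ + 2*π - α), fC x φ θ

lemma gC_eq (ϑ : ℝ) :
    gC x φ α ϑ = (1 / (2 * ((π : ℂ) - α))) * ∫ s in α..(2*π - α), fC x φ (ϑ + s) := by
  simp only [gC]
  congr 1
  rw [intervalIntegral.integral_comp_add_left (fC x φ) ϑ]
  congr 1
  ring

lemma gC_continuous : Continuous (gC x φ α) := by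
  have hInt : ∀ a b : ℝ, IntervalIntegrable (fC x φ) MeasureTheory.volume a b :=
    fun a b => (fC_continuous x φ).intervalIntegrable _ _
  have hP : Continuous (fun t : ℝ => ∫ s in (0:ℝ)..t, fC x φ s) :=
    intervalIntegral.continuous_primitive hInt 0
  have key : gC x φ α = fun ϑ => (1 / (2 * ((π : ℂ) - α))) *
      ((∫ s in (0:ℝ)..(ϑ + 2*π - α), fC x φ s) - ∫ s in (0:ℝ)..(ϑ + α), fC x φ s) := by
    funext ϑ
    simp only [gC]
    congr 1
    have h := intervalIntegral.integral_add_adjacent_intervals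
      (hInt 0 (ϑ + α)) (hInt (ϑ + α) (ϑ + 2*π - α))
    linear_combination h
  rw [key]
  exact continuous_const.mul
    ((hP.comp ((continuous_id.add continuous_const).sub continuous_const)).sub
      (hP.comp (continuous_id.add continuous_const)))

lemma gC_periodic : Function.Periodic (gC x φ α) (2*π) := by
  intro t
  simp only [gC]
  congr 1
  have h : ∫ θ in (t + 2*π + α)..(t + 2*π + 2*π - α), fC x φ θ
      = ∫ θ in (t + α)..(t + 2*π - α), fC x φ (θ + 2*π) := by
    rw [intervalIntegral.integral_comp_add_right (fC x φ) (2*π)]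
    congr 1 <;> ring
  rw [h]
  exact intervalIntegral.integral_congr fun θ _ => fC_periodic x φ θ

/-- The aperture weight. -/
noncomputable def wC (n : ℤ) : ℂ :=
  (1 / (2 * ((π : ℂ) - α))) * ∫ s in α..(2*π - α), Complex.exp (Complex.I * n * s)

lemma q_periodic (n : ℤ) : Function.Periodic
    (fun u : ℝ => Complex.exp (-Complex.I * n * u) * fC x φ u) (2*π) := by
  intro u
  simp only
  rw [fC_periodic]
  congr 1
  rw [show -Complex.I * n * ((u + 2*π : ℝ) : ℂ) = -Complex.I * n * u + (-n : ℤ) * (2*π*Complex.I) by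
    push_cast; ring]
  rw [Complex.exp_add, Complex.exp_int_mul_two_pi_mul_I, mul_one]

lemma inner_eval (n : ℤ) (s : ℝ) :
    ∫ t in (0:ℝ)..(2*π), Complex.exp (-Complex.I * n * t) * fC x φ (t + s)
      = Complex.exp (Complex.I * n * s) *
        ∫ t in (0:ℝ)..(2*π), Complex.exp (-Complex.I * n * t) * fC x φ t := by
  have hpt : ∀ t ∈ uIcc (0:ℝ) (2*π),
      Complex.exp (-Complex.I * n * t) * fC x φ (t + s)
        = Complex.exp (Complex.I * n * s) *
          (Complex.exp (-Complex.I * n * ((t + s : ℝ) : ℂ)) * fC x φ (t + s)) := by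
    intro t _
    rw [← mul_assoc, ← Complex.exp_add]
    congr 2
    push_cast
    ring
  rw [intervalIntegral.integral_congr hpt, intervalIntegral.integral_const_mul]
  congr 1
  rw [show (fun t : ℝ => Complex.exp (-Complex.I * n * ((t + s : ℝ) : ℂ)) * fC x φ (t + s))
      = fun t : ℝ => (fun u : ℝ => Complex.exp (-Complex.I * n * u) * fC x φ u) (t + s) by rfl]
  rw [intervalIntegral.integral_comp_add_right
    (fun u : ℝ => Complex.exp (-Complex.I * n * u) * fC x φ u) s]
  have h := (q_periodic x φ n).intervalIntegral_add_eq s 0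
  rw [zero_add, show s + 2*π = 2*π + s by ring] at h
  rw [zero_add]
  exact h

lemma swap_core (n : ℤ) (hαπ : α ≤ π) :
    ∫ t in (0:ℝ)..(2*π), (∫ s in α..(2*π - α), Complex.exp (-Complex.I * n * t) * fC x φ (t + s))
      = ∫ s in α..(2*π - α),
          (∫ t in (0:ℝ)..(2*π), Complex.exp (-Complex.I * n * t) * fC x φ (t + s)) := by
  have h1 : α ≤ 2*π - α := by
    have := Real.pi_pos
    linarith
  have h2 : (0:ℝ) ≤ 2*π := Real.two_pi_pos.le
  simp_rw [intervalIntegral.integral_of_le h1, intervalIntegral.integral_of_le h2]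
  haveI : IsFiniteMeasure (MeasureTheory.volume.restrict (Set.Ioc (0:ℝ) (2*π))) :=
    ⟨by rw [Measure.restrict_apply_univ]; exact measure_Ioc_lt_top⟩
  haveI : IsFiniteMeasure (MeasureTheory.volume.restrict (Set.Ioc α (2*π - α))) :=
    ⟨by rw [Measure.restrict_apply_univ]; exact measure_Ioc_lt_top⟩
  apply MeasureTheory.integral_integral_swap
  have hcont : Continuous (Function.uncurry fun (t s : ℝ) =>
      Complex.exp (-Complex.I * n * t) * fC x φ (t + s)) := by
    apply Continuous.mul
    · fun_prop
    · exact (fC_continuous x φ).comp (continuous_fst.add continuous_snd)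
  refine MeasureTheory.Integrable.mono' (MeasureTheory.integrable_const 1)
    hcont.aestronglyMeasurable (Filter.Eventually.of_forall fun p => ?_)
  rw [Function.uncurry]
  rw [norm_mul, fC_norm, mul_one]
  rw [show -Complex.I * n * (p.1 : ℂ) = ((-(n * p.1) : ℝ) : ℂ) * Complex.I by push_cast; ring]
  rw [norm_exp_I_mul _ (by simp [Complex.mul_I_re])]

lemma fourierCoeff_gC (n : ℤ) (hαπ : α ≤ π) :
    fourierCoeff (gC_periodic x φ α).lift n = wC α n * fourierCoeff (fC_periodic x φ).lift n := by
  rw [fourierCoeff_lift, fourierCoeff_lift]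
  have hgc : ∀ t ∈ uIcc (0:ℝ) (2*π),
      Complex.exp (-Complex.I * n * t) * gC x φ α t
        = (1 / (2 * ((π : ℂ) - α))) *
            ∫ s in α..(2*π - α), Complex.exp (-Complex.I * n * t) * fC x φ (t + s) := by
    intro t _
    rw [intervalIntegral.integral_const_mul, gC_eq]
    ring
  rw [intervalIntegral.integral_congr hgc, intervalIntegral.integral_const_mul,
    swap_core x φ α n hαπ]
  have h3 : ∀ s ∈ uIcc α (2*π - α),
      (∫ t in (0:ℝ)..(2*π), Complex.exp (-Complex.I * n * t) * fC x φ (t + s))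
        = Complex.exp (Complex.I * n * s) *
          ∫ t in (0:ℝ)..(2*π), Complex.exp (-Complex.I * n * t) * fC x φ t :=
    fun s _ => inner_eval x φ n s
  rw [intervalIntegral.integral_congr h3, intervalIntegral.integral_mul_const, wC,
    Complex.real_smul, Complex.real_smul]
  ring

lemma pi_sub_ne (hαπ : α < π) : ((π : ℂ) - α) ≠ 0 := by
  rw [show ((π : ℂ) - α) = ((π - α : ℝ) : ℂ) by push_cast; ring]
  exact Complex.ofReal_ne_zero.mpr (sub_ne_zero.mpr (ne_of_gt hαπ))

lemma wC_zero (hαπ : α < π) : wC α 0 = 1 := by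
  unfold wC
  simp only [Int.cast_zero, mul_zero, zero_mul, Complex.exp_zero]
  rw [intervalIntegral.integral_const, Complex.real_smul, mul_one]
  have hw := pi_sub_ne α hαπ
  push_cast
  field_simp
  ring

lemma wC_apply (hαπ : α < π) (n : ℤ) (hn : n ≠ 0) :
    wC α n = -(((Real.sin (n * α) : ℝ)) : ℂ) / (n * ((π : ℂ) - α)) := by
  have hc : (Complex.I * (n : ℂ)) ≠ 0 :=
    mul_ne_zero Complex.I_ne_zero (Int.cast_ne_zero.mpr hn)
  have hnC : ((n : ℂ)) ≠ 0 := Int.cast_ne_zero.mpr hn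
  unfold wC
  rw [show (fun s : ℝ => Complex.exp (Complex.I * n * s))
      = fun s : ℝ => Complex.exp ((Complex.I * n) * s) by funext s; rw [mul_assoc]]
  rw [integral_exp_mul_complex hc]
  have he : Complex.exp ((Complex.I * n) * ((2*π - α : ℝ) : ℂ))
      = Complex.exp (-(((n * α : ℝ) : ℂ) * Complex.I)) := by
    rw [show (Complex.I * n) * ((2*π - α : ℝ) : ℂ)
        = -(((n * α : ℝ) : ℂ) * Complex.I) + n * (2*π*Complex.I) by push_cast; ring]
    rw [Complex.exp_add, Complex.exp_int_mul_two_pi_mul_I, mul_one]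
  have he2 : Complex.exp ((Complex.I * n) * ((α : ℝ) : ℂ))
      = Complex.exp ((((n * α : ℝ) : ℂ)) * Complex.I) := by
    congr 1; push_cast; ring
  rw [he, he2]
  have hs : Complex.exp (-((((n * α : ℝ)) : ℂ) * Complex.I))
      - Complex.exp ((((n * α : ℝ)) : ℂ) * Complex.I)
      = -2 * Complex.I * ((Real.sin (n * α) : ℝ) : ℂ) := by
    rw [show -((((n * α : ℝ)) : ℂ) * Complex.I) = (-(((n * α : ℝ)) : ℂ)) * Complex.I by ring]
    rw [Complex.exp_mul_I, Complex.exp_mul_I, Complex.cos_neg, Complex.sin_neg,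
      ← Complex.ofReal_sin]
    ring
  rw [hs]
  have hw : ((π : ℂ) - α) ≠ 0 := pi_sub_ne α hαπ
  field_simp

lemma cf_mul (n : ℤ) :
    (Complex.I ^ (-n) * Complex.exp (-Complex.I * ((-n : ℤ) : ℂ) * φ) * besselJ (-n) x) *
      (Complex.I ^ n * Complex.exp (-Complex.I * (n : ℂ) * φ) * besselJ n x)
    = (-1 : ℂ) ^ n * besselJ n x ^ 2 := by
  rw [besselJ_neg]
  have h1 : (Complex.I : ℂ) ^ (-n) * Complex.I ^ n = 1 := by
    rw [← zpow_add₀ Complex.I_ne_zero]; simp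
  have h2 : Complex.exp (-Complex.I * ((-n : ℤ) : ℂ) * φ)
      * Complex.exp (-Complex.I * (n : ℂ) * φ) = 1 := by
    rw [← Complex.exp_add, show -Complex.I * ((-n : ℤ) : ℂ) * φ + -Complex.I * (n : ℂ) * φ = 0 by
      push_cast; ring, Complex.exp_zero]
  have h3 : Complex.I ^ (-n) * Complex.exp (-Complex.I * ((-n : ℤ) : ℂ) * φ) *
        ((-1:ℂ) ^ n * besselJ n x) *
      (Complex.I ^ n * Complex.exp (-Complex.I * (n : ℂ) * φ) * besselJ n x)
    = (Complex.I ^ (-n) * Complex.I ^ n) *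
        (Complex.exp (-Complex.I * ((-n : ℤ) : ℂ) * φ) * Complex.exp (-Complex.I * (n : ℂ) * φ)) *
        ((-1:ℂ) ^ n * besselJ n x ^ 2) := by ring
  rw [h3, h1, h2]
  ring

/-- The `n`-th term of the bilinear expansion. -/
noncomputable def SS (x φ α : ℝ) : ℤ → ℂ := fun n =>
  fourierCoeff ((gC_periodic x φ α).lift) (-n) * fourierCoeff ((fC_periodic x φ).lift) n

lemma S_eq (hα0 : 0 < α) (hαπ : α < π) (n : ℤ) :
    SS x φ α n = besselJ n x ^ 2 * ((rsinc ((n : ℝ) * (π - α)) : ℝ) : ℂ) := by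
  unfold SS
  rw [fourierCoeff_gC x φ α (-n) hαπ.le, fourierCoeff_fC, fourierCoeff_fC, mul_assoc,
    cf_mul x φ n]
  rcases eq_or_ne n 0 with rfl | hn
  · rw [neg_zero, wC_zero α hαπ]
    norm_num [rsinc]
  · have hw : wC α (-n) = -(((Real.sin ((n : ℝ) * α) : ℝ)) : ℂ) / (n * ((π : ℂ) - α)) := by
      rw [wC_apply α hαπ (-n) (neg_ne_zero.mpr hn)]
      rw [show ((-n : ℤ) : ℝ) * α = -((n : ℝ) * α) by push_cast; ring, Real.sin_neg]
      push_cast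
      rw [div_eq_div_iff]
      · ring
      · exact mul_ne_zero (neg_ne_zero.mpr (Int.cast_ne_zero.mpr hn)) (pi_sub_ne α hαπ)
      · exact mul_ne_zero (Int.cast_ne_zero.mpr hn) (pi_sub_ne α hαπ)
    have hθ : (n : ℝ) * (π - α) ≠ 0 :=
      mul_ne_zero (Int.cast_ne_zero.mpr (by exact_mod_cast hn))
        (sub_ne_zero.mpr (ne_of_gt hαπ))
    have hsin : Real.sin ((n : ℝ) * (π - α)) = -((-1 : ℝ) ^ n * Real.sin ((n : ℝ) * α)) := by
      rw [show (n : ℝ) * (π - α) = (n : ℝ) * π - (n : ℝ) * α by ring]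
      exact Real.sin_int_mul_pi_sub ((n : ℝ) * α) n
    rw [hw, rsinc, if_neg hθ, hsin]
    have h3 : ((-1 : ℂ)) ^ n * ((-1 : ℂ)) ^ n = 1 := by rw [← mul_zpow]; norm_num
    have hN : ((n : ℂ)) ≠ 0 := Int.cast_ne_zero.mpr hn
    have hW : ((π : ℂ) - α) ≠ 0 := pi_sub_ne α hαπ
    push_cast
    field_simp

lemma intervalIntegral_conj (f : ℝ → ℂ) (a b : ℝ) :
    ∫ t in a..b, (starRingEnd ℂ) (f t) = (starRingEnd ℂ) (∫ t in a..b, f t) := by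
  rw [intervalIntegral, intervalIntegral, integral_conj, integral_conj, ← map_sub]

lemma key_parseval (hα0 : 0 < α) (hαπ : α < π) :
    Summable (SS x φ α) ∧
    (1/(2*π) : ℝ) • (∫ t in (0:ℝ)..(2*π), fC x φ t * gC x φ α t) = ∑' n : ℤ, SS x φ α n := by
  set u : ℝ → ℂ := fun t => (starRingEnd ℂ) (gC x φ α t) with hu_def
  have hu_per : Function.Periodic u (2*π) := fun t => by
    simp only [hu_def]
    rw [gC_periodic x φ α t]
  have hu_cont : Continuous u := continuous_star.comp (gC_continuous x φ α)
  set F : C(AddCircle (2*π), ℂ) :=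
    ⟨(fC_periodic x φ).lift, lift_continuous (fC_periodic x φ) (fC_continuous x φ)⟩ with hF_def
  set U : C(AddCircle (2*π), ℂ) := ⟨hu_per.lift, lift_continuous hu_per hu_cont⟩ with hU_def
  set FL := ContinuousMap.toLp (E := ℂ) 2 AddCircle.haarAddCircle ℂ F with hFL_def
  set UL := ContinuousMap.toLp (E := ℂ) 2 AddCircle.haarAddCircle ℂ U with hUL_def
  have hF : ∀ i : ℤ, fourierBasis.repr FL i = fourierCoeff (fC_periodic x φ).lift i := fun i => by
    rw [hFL_def, fourierBasis_repr, fourierCoeff_toLp]; rfl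
  have hU : ∀ i : ℤ, fourierBasis.repr UL i = fourierCoeff hu_per.lift i := fun i => by
    rw [hUL_def, fourierBasis_repr, fourierCoeff_toLp]; rfl
  have hconj : ∀ i : ℤ, (starRingEnd ℂ) (fourierCoeff hu_per.lift i)
      = fourierCoeff (gC_periodic x φ α).lift (-i) := by
    intro i
    rw [fourierCoeff_lift, fourierCoeff_lift, Complex.real_smul, Complex.real_smul,
      map_mul, Complex.conj_ofReal, ← intervalIntegral_conj]
    congr 1
    refine intervalIntegral.integral_congr fun t _ => ?_
    simp only [hu_def, map_mul, ← Complex.exp_conj, map_neg, Complex.conj_I,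
      Complex.conj_ofReal, map_intCast, Complex.conj_conj]
    congr 2
    push_cast
    ring
  have hterm : ∀ i : ℤ,
      (inner ℂ UL (fourierBasis i) : ℂ) * (inner ℂ (fourierBasis i) FL : ℂ) = SS x φ α i := by
    intro i
    have e1 : (inner ℂ UL (fourierBasis i) : ℂ) = (starRingEnd ℂ) (fourierBasis.repr UL i) := by
      rw [HilbertBasis.repr_apply_apply, inner_conj_symm]
    rw [e1, ← HilbertBasis.repr_apply_apply, hU, hF, hconj]
    rfl
  have hsumm : Summable (SS x φ α) :=
    (fourierBasis.summable_inner_mul_inner UL FL).congr hterm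
  refine ⟨hsumm, ?_⟩
  have htsum := fourierBasis.tsum_inner_mul_inner UL FL
  have hts : ∑' i : ℤ, SS x φ α i = (inner ℂ UL FL : ℂ) := by
    rw [← htsum]
    exact tsum_congr fun i => (hterm i).symm
  rw [hts]
  have hinner : (inner ℂ UL FL : ℂ)
      = ∫ z, ((gC_periodic x φ α).lift z) * ((fC_periodic x φ).lift z)
          ∂(AddCircle.haarAddCircle) := by
    rw [MeasureTheory.L2.inner_def]
    refine MeasureTheory.integral_congr_ae ?_
    filter_upwards [ContinuousMap.coeFn_toLp (p := 2) (μ := AddCircle.haarAddCircle) (𝕜 := ℂ) F,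
      ContinuousMap.coeFn_toLp (p := 2) (μ := AddCircle.haarAddCircle) (𝕜 := ℂ) U] with z hFz hUz
    rw [show (UL : AddCircle (2*π) → ℂ) z = U z from hUz,
      show (FL : AddCircle (2*π) → ℂ) z = F z from hFz]
    rw [RCLike.inner_apply, mul_comm]
    congr 1
    · induction z using QuotientAddGroup.induction_on with
      | H t =>
        show (starRingEnd ℂ) (hu_per.lift t) = (gC_periodic x φ α).lift t
        rw [hu_per.lift_coe, (gC_periodic x φ α).lift_coe]
        simp [hu_def]
  rw [hinner, integral_haar_eq]
  congr 1
  refine intervalIntegral.integral_congr fun t _ => ?_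
  rw [(gC_periodic x φ α).lift_coe, (fC_periodic x φ).lift_coe, mul_comm]

lemma rsinc_neg (t : ℝ) : rsinc (-t) = rsinc t := by
  unfold rsinc
  rcases eq_or_ne t 0 with rfl | h
  · simp
  · rw [if_neg (neg_ne_zero.mpr h), if_neg h, Real.sin_neg, neg_div_neg_eq]

lemma SS_even (hα0 : 0 < α) (hαπ : α < π) (n : ℤ) : SS x φ α (-n) = SS x φ α n := by
  rw [S_eq x φ α hα0 hαπ, S_eq x φ α hα0 hαπ, besselJ_neg,
    show ((-n : ℤ) : ℝ) * (π - α) = -((n : ℝ) * (π - α)) by push_cast; ring,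
    rsinc_neg, mul_pow, show ((-1 : ℂ) ^ n) ^ 2 = 1 by rw [sq, ← mul_zpow]; norm_num, one_mul]

lemma SS_zero (hα0 : 0 < α) (hαπ : α < π) : SS x φ α 0 = besselJ 0 x ^ 2 := by
  rw [S_eq x φ α hα0 hαπ]
  norm_num [rsinc]

lemma int_sum_split (hα0 : 0 < α) (hαπ : α < π) :
    ∑' n : ℤ, SS x φ α n = SS x φ α 0 + 2 * ∑' p : ℕ, SS x φ α ((p : ℤ) + 1) := by
  have hS : Summable (SS x φ α) := (key_parseval x φ α hα0 hαπ).1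
  have h1 : Summable (fun p : ℕ => SS x φ α ((p : ℤ) + 1)) :=
    hS.comp_injective (fun a b h => by simpa using h)
  have h0 : Summable (fun p : ℕ => SS x φ α (p : ℤ)) :=
    hS.comp_injective (fun a b h => by exact_mod_cast h)
  rw [← tsum_nat_add_neg_add_one hS]
  rw [tsum_congr (fun n : ℕ =>
    congrArg (fun z => SS x φ α ↑n + z) (SS_even x φ α hα0 hαπ ((n : ℤ) + 1)))]
  rw [Summable.tsum_add h0 h1, Summable.tsum_eq_zero_add h0]
  have hc : ∑' n : ℕ, SS x φ α ((n + 1 : ℕ) : ℤ) = ∑' n : ℕ, SS x φ α ((n : ℤ) + 1) :=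
    tsum_congr fun n => by norm_num
  rw [hc]
  push_cast
  ring

end Circle

end LambdaAux

open LambdaAux in
/-- Continuous-aperture form of the Λ-term: for real `x`, `φ` and `0 < α < π`,
`(1/(2π)) ∫_0^{2π} exp(i x cos(ϑ − φ)) [(1/(2(π − α))) ∫_{ϑ+α}^{ϑ+2π−α} exp(i x cos(θ − φ)) dθ] dϑ
  = J_0(x)² + 2 ∑_{p=1}^∞ J_p(x)² sinc(p(π − α))`, the series converging absolutely. -/
theorem lambda_term_continuous_aperture (x φ α : ℝ) (hα0 : 0 < α) (hαπ : α < Real.pi) :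
    Summable (fun p : ℕ =>
      ‖besselJ (p + 1) x ^ 2 * (rsinc (((p : ℝ) + 1) * (Real.pi - α)) : ℂ)‖) ∧
    (1 / (2 * (Real.pi : ℂ))) *
        ∫ ϑ in (0:ℝ)..(2 * Real.pi),
          Complex.exp (Complex.I * (x : ℂ) * (Real.cos (ϑ - φ) : ℂ)) *
            ((1 / (2 * ((Real.pi : ℂ) - (α : ℂ)))) *
              ∫ θ in (ϑ + α)..(ϑ + 2 * Real.pi - α),
                Complex.exp (Complex.I * (x : ℂ) * (Real.cos (θ - φ) : ℂ)))
      = besselJ 0 x ^ 2 +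
        2 * ∑' p : ℕ,
          besselJ (p + 1) x ^ 2 * (rsinc (((p : ℝ) + 1) * (Real.pi - α)) : ℂ) := by
  haveI : Fact (0 < 2 * Real.pi) := ⟨Real.two_pi_pos⟩
  obtain ⟨hS, hEq⟩ := key_parseval x φ α hα0 hαπ
  have h1 : Summable (fun p : ℕ => SS x φ α ((p : ℤ) + 1)) :=
    hS.comp_injective (fun a b h => by simpa using h)
  have hterm : ∀ p : ℕ, SS x φ α ((p : ℤ) + 1)
      = besselJ ((p : ℤ) + 1) x ^ 2 * ((rsinc (((p : ℝ) + 1) * (Real.pi - α)) : ℝ) : ℂ) := by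
    intro p
    rw [S_eq x φ α hα0 hαπ]
    norm_num
  constructor
  · refine (summable_norm_iff.mpr h1).congr fun p => ?_
    rw [hterm p]
  · have hL : (1 / (2 * (Real.pi : ℂ))) *
        (∫ ϑ in (0:ℝ)..(2 * Real.pi),
          Complex.exp (Complex.I * (x : ℂ) * (Real.cos (ϑ - φ) : ℂ)) *
            ((1 / (2 * ((Real.pi : ℂ) - (α : ℂ)))) *
              ∫ θ in (ϑ + α)..(ϑ + 2 * Real.pi - α),
                Complex.exp (Complex.I * (x : ℂ) * (Real.cos (θ - φ) : ℂ))))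
        = (1/(2*Real.pi) : ℝ) • (∫ t in (0:ℝ)..(2*Real.pi), fC x φ t * gC x φ α t) := by
      rw [Complex.real_smul,
        show ((1/(2*Real.pi) : ℝ) : ℂ) = 1/(2*(Real.pi:ℂ)) by push_cast; ring]
      rfl
    rw [hL, hEq, int_sum_split x φ α hα0 hαπ, SS_zero x φ α hα0 hαπ,
      tsum_congr hterm]
end
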